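/- Let X be a complete CAT(0) space and A, B ⊆ X nonempty closed convex with S = {(a,b) ∈ A×B : d(a,b) = dist(A,B)} ≠ ∅. Define from x₀ the alternating projection sequences y_n = P_B(x_n), x_{n+1} = P_A(y_n). Then there exists (a,b) ∈ S such that (x_n) Δ-converges to a and (y_n) Δ-converges to b; if A or B is locally compact, the convergence is strong. -/

import Mathlib

open Filter Topology Metric Set

/-- A (chosen) geodesic bicombing witnessing that `X` is a geodesic space:
`geo x y t` is the point at parameter fraction `t ∈ [0,1]` on a geodesic from `x` to `y`. -/
structure Geodesic (X : Type*) [MetricSpace X] where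
  geo : X → X → ℝ → X
  geo_zero : ∀ x y, geo x y 0 = x
  geo_one : ∀ x y, geo x y 1 = y
  geo_dist : ∀ x y : X, ∀ s ∈ Set.Icc (0:ℝ) 1, ∀ t ∈ Set.Icc (0:ℝ) 1,
    dist (geo x y s) (geo x y t) = |s - t| * dist x y
/-- `u` is an asymptotic center of the sequence `s`: it minimizes `y ↦ limsup dist y (s n)`. -/
def IsAsymptoticCenter {X : Type*} [MetricSpace X] (s : ℕ → X) (u : X) : Prop :=
  ∀ y : X, Filter.limsup (fun n => dist u (s n)) Filter.atTop ≤
    Filter.limsup (fun n => dist y (s n)) Filter.atTop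

/-- `s` Δ-converges to `u`: `u` is the unique asymptotic center of every subsequence. -/
def DeltaConvergesTo {X : Type*} [MetricSpace X] (s : ℕ → X) (u : X) : Prop :=
  ∀ φ : ℕ → ℕ, StrictMono φ →
    IsAsymptoticCenter (s ∘ φ) u ∧ ∀ v : X, IsAsymptoticCenter (s ∘ φ) v → v = u

/-- The CN (Bruhat–Tits) inequality characterizing CAT(0) among geodesic spaces. -/
def CAT0 (X : Type*) [MetricSpace X] : Prop :=
  ∀ x y z m : X, dist x m = dist x y / 2 → dist y m = dist x y / 2 →
    dist z m ^ 2 ≤ dist z x ^ 2 / 2 + dist z y ^ 2 / 2 - dist x y ^ 2 / 4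


section Chunk1
section Chunk1
namespace APBA

variable {X : Type*} [MetricSpace X]

section Geo
variable (G : Geodesic X)

lemma geo_dist_left (x y : X) {t : ℝ} (ht : t ∈ Set.Icc (0:ℝ) 1) :
    dist x (G.geo x y t) = t * dist x y := by
  have h := G.geo_dist x y 0 ⟨le_refl 0, zero_le_one⟩ t ht
  rw [G.geo_zero] at h
  rw [h, abs_of_nonpos (by linarith [ht.1])]
  ring_nf

lemma geo_dist_right (x y : X) {t : ℝ} (ht : t ∈ Set.Icc (0:ℝ) 1) :
    dist (G.geo x y t) y = (1 - t) * dist x y := by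
  have h := G.geo_dist x y t ht 1 ⟨zero_le_one, le_refl 1⟩
  rw [G.geo_one] at h
  rw [h, abs_of_nonpos (by linarith [ht.2])]
  ring_nf

/-- the G-midpoint is a metric midpoint -/
lemma geo_half_left (x y : X) :
    dist x (G.geo x y (1/2)) = dist x y / 2 := by
  rw [geo_dist_left G x y (by constructor <;> norm_num)]; ring

lemma geo_half_right (x y : X) :
    dist y (G.geo x y (1/2)) = dist x y / 2 := by
  rw [dist_comm, geo_dist_right G x y (by constructor <;> norm_num)]; ring

/-- continuity of t ↦ geo x y t on [0,1] -/
lemma geo_continuousOn (x y : X) : ContinuousOn (fun t => G.geo x y t) (Set.Icc (0:ℝ) 1) := by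
  intro t ht
  rw [Metric.continuousWithinAt_iff]
  intro ε hε
  rcases eq_or_ne (dist x y) 0 with h0 | h0
  · exact ⟨1, one_pos, fun {s} hs _ => by
      rw [G.geo_dist x y s hs t ht, h0, mul_zero]; exact hε⟩
  · refine ⟨ε / dist x y, by positivity, fun {s} hs hst => ?_⟩
    rw [G.geo_dist x y s hs t ht]
    have hd : 0 < dist x y := lt_of_le_of_ne dist_nonneg (Ne.symm h0)
    calc |s - t| * dist x y < (ε / dist x y) * dist x y := by
          apply mul_lt_mul_of_pos_right _ hd
          rw [Real.dist_eq] at hst; exact hst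
      _ = ε := by field_simp

end Geo

/-- dyadic density lemma -/
lemma dyadic_closure {S : Set ℝ} (hcl : IsClosed S) (h0 : (0:ℝ) ∈ S) (h1 : (1:ℝ) ∈ S)
    (hmid : ∀ s ∈ S, ∀ t ∈ S, (s + t)/2 ∈ S) : Set.Icc (0:ℝ) 1 ⊆ S := by
  have hdy : ∀ k : ℕ, ∀ j : ℕ, j ≤ 2^k → ((j : ℝ)/2^k) ∈ S := by
    intro k
    induction k with
    | zero => intro j hj; interval_cases j <;> simpa
    | succ k ih =>
      intro j hj
      have h1' : j / 2 ≤ 2 ^ k := by omega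
      have h2' : (j + 1) / 2 ≤ 2 ^ k := by omega
      have := hmid _ (ih (j/2) h1') _ (ih ((j+1)/2) h2')
      have hcast : (((j/2 : ℕ) : ℝ)/2^k + (((j+1)/2 : ℕ) : ℝ)/2^k)/2 = (j : ℝ)/2^(k+1) := by
        have : (j/2 : ℕ) + ((j+1)/2 : ℕ) = j := by omega
        have hc : ((j/2 : ℕ) : ℝ) + (((j+1)/2 : ℕ) : ℝ) = (j : ℝ) := by
          rw [← Nat.cast_add, this]
        field_simp
        rw [← hc]
        ring
      rwa [hcast] at this
  intro t ht
  have : ∀ k : ℕ, ∃ q ∈ S, |t - q| ≤ (2:ℝ)⁻¹^k := by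
    intro k
    refine ⟨((⌊t * 2^k⌋₊ : ℝ))/2^k, hdy k _ ?_, ?_⟩
    · have : t * 2^k ≤ 2^k := by
        nlinarith [ht.2, pow_pos (by norm_num : (0:ℝ) < 2) k]
      calc ⌊t * 2^k⌋₊ ≤ ⌊(2:ℝ)^k⌋₊ := Nat.floor_le_floor this
        _ = 2^k := by
            rw [show ((2:ℝ)^k) = ((2^k : ℕ) : ℝ) by push_cast; ring, Nat.floor_natCast]
    · have h2k : (0:ℝ) < 2^k := by positivity
      have hfl : (⌊t * 2^k⌋₊ : ℝ) ≤ t * 2^k := Nat.floor_le (by nlinarith [ht.1])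
      have hfl2 : t * 2^k < ⌊t * 2^k⌋₊ + 1 := Nat.lt_floor_add_one _
      have e1 : (⌊t * 2^k⌋₊ : ℝ)/2^k ≤ t := by rw [div_le_iff₀ h2k]; exact hfl
      rw [abs_of_nonneg (by linarith), inv_pow, ← one_div]
      have e2 : t ≤ ((⌊t * 2^k⌋₊ : ℝ) + 1)/2^k := by rw [le_div_iff₀ h2k]; linarith
      have e3 : ((⌊t * 2^k⌋₊ : ℝ) + 1)/2^k = (⌊t * 2^k⌋₊ : ℝ)/2^k + 1/2^k := by ring
      linarith
  choose q hqS hq using this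
  have htend : Filter.Tendsto q Filter.atTop (nhds t) := by
    rw [tendsto_iff_dist_tendsto_zero]
    apply squeeze_zero (fun k => dist_nonneg) (fun k => ?_)
      (tendsto_pow_atTop_nhds_zero_of_lt_one (by norm_num) (by norm_num : (2:ℝ)⁻¹ < 1))
    rw [Real.dist_eq, abs_sub_comm]; exact hq k
  exact hcl.mem_of_tendsto htend (Filter.Eventually.of_forall hqS)

end APBA

end Chunk1

section Chunk2
namespace APBA

variable {X : Type*} [MetricSpace X]

/-- squares to distances -/
lemma dist_le_of_sq_le_sq {a : X} {b : X} {c : ℝ} (h : dist a b ^ 2 ≤ c ^ 2) (hc : 0 ≤ c) :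
    dist a b ≤ c := (abs_le_of_sq_le_sq' h hc).2

/-- midpoint contraction, common endpoint -/
lemma mid_contract (hX : CAT0 X) {α β β' m₁ m₃ : X}
    (h1 : dist α m₁ = dist α β / 2) (h2 : dist β m₁ = dist α β / 2)
    (h3 : dist α m₃ = dist α β' / 2) (h4 : dist β' m₃ = dist α β' / 2) :
    dist m₁ m₃ ≤ dist β β' / 2 := by
  have e1 := hX α β' m₁ m₃ h3 h4
  have e2 := hX α β β' m₁ h1 h2
  apply dist_le_of_sq_le_sq _ (by positivity)
  have hc1 : dist m₁ α = dist α β / 2 := by rw [dist_comm]; exact h1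
  have hc2 : dist β' α = dist α β' := dist_comm _ _
  have hc3 : dist β' β = dist β β' := dist_comm _ _
  have hc4 : dist m₁ β' = dist β' m₁ := dist_comm _ _
  rw [hc1, hc4] at e1
  rw [hc2, hc3] at e2
  nlinarith [e1, e2]

/-- midpoint contraction, two pairs -/
lemma mid_contract2 (G : Geodesic X) (hX : CAT0 X) {α β α' β' m₁ m₂ : X}
    (h1 : dist α m₁ = dist α β / 2) (h2 : dist β m₁ = dist α β / 2)
    (h3 : dist α' m₂ = dist α' β' / 2) (h4 : dist β' m₂ = dist α' β' / 2) :
    dist m₁ m₂ ≤ dist α α' / 2 + dist β β' / 2 := by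
  set m₃ := G.geo α β' (1/2) with hm₃
  have g1 : dist α m₃ = dist α β' / 2 := geo_half_left G α β'
  have g2 : dist β' m₃ = dist α β' / 2 := geo_half_right G α β'
  have d1 : dist m₁ m₃ ≤ dist β β' / 2 := mid_contract hX h1 h2 g1 g2
  have d2 : dist m₃ m₂ ≤ dist α α' / 2 := by
    apply mid_contract hX (α := β') (β := α) (β' := α') (m₁ := m₃) (m₃ := m₂)
    · show dist β' m₃ = dist β' α / 2
      rw [dist_comm β' α]; exact g2
    · show dist α m₃ = dist β' α / 2
      rw [dist_comm β' α]; exact g1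
    · show dist β' m₂ = dist β' α' / 2
      rw [dist_comm β' α']; exact h4
    · show dist α' m₂ = dist β' α' / 2
      rw [dist_comm β' α']; exact h3
  calc dist m₁ m₂ ≤ dist m₁ m₃ + dist m₃ m₂ := dist_triangle _ _ _
    _ ≤ dist β β' / 2 + dist α α' / 2 := add_le_add d1 d2
    _ = dist α α' / 2 + dist β β' / 2 := by ring

/-- convexity of squared distance along geodesics (CVX) -/
lemma cvx (G : Geodesic X) (hX : CAT0 X) (z x y : X) {t : ℝ} (ht : t ∈ Set.Icc (0:ℝ) 1) :
    dist z (G.geo x y t) ^ 2 ≤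
      (1 - t) * dist z x ^ 2 + t * dist z y ^ 2 - t * (1 - t) * dist x y ^ 2 := by
  set f : ℝ → ℝ := fun s => min 1 (max 0 s) with hf
  have hfc : Continuous f := continuous_const.min (continuous_const.max continuous_id)
  have hfI : ∀ s : ℝ, f s ∈ Set.Icc (0:ℝ) 1 := fun s =>
    ⟨le_min (by norm_num) (le_max_left 0 s), min_le_left _ _⟩
  have hfid : ∀ s ∈ Set.Icc (0:ℝ) 1, f s = s := fun s hs => by
    simp only [hf, max_eq_right hs.1, min_eq_right hs.2]
  have hgc : Continuous fun s : ℝ => dist z (G.geo x y (f s)) := by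
    apply Continuous.dist continuous_const
    exact (geo_continuousOn G x y).comp_continuous hfc hfI
  set S : Set ℝ := Set.Icc (0:ℝ) 1 ∩ {s | dist z (G.geo x y (f s)) ^ 2 ≤
      (1 - s) * dist z x ^ 2 + s * dist z y ^ 2 - s * (1 - s) * dist x y ^ 2} with hS
  have hsub : Set.Icc (0:ℝ) 1 ⊆ S := by
    apply dyadic_closure
    · apply IsClosed.inter isClosed_Icc
      exact isClosed_le (hgc.pow 2) (by continuity)
    · refine ⟨⟨le_refl 0, zero_le_one⟩, ?_⟩
      simp only [Set.mem_setOf_eq]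
      rw [hfid 0 ⟨le_refl 0, zero_le_one⟩, G.geo_zero]
      simp
    · refine ⟨⟨zero_le_one, le_refl 1⟩, ?_⟩
      simp only [Set.mem_setOf_eq]
      rw [hfid 1 ⟨zero_le_one, le_refl 1⟩, G.geo_one]
      simp
    · rintro s ⟨hsI, hs⟩ t ⟨htI, ht'⟩
      simp only [Set.mem_setOf_eq] at hs ht'
      have hmI : (s + t)/2 ∈ Set.Icc (0:ℝ) 1 := ⟨by linarith [hsI.1, htI.1], by linarith [hsI.2, htI.2]⟩
      refine ⟨hmI, ?_⟩
      simp only [Set.mem_setOf_eq]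
      rw [hfid _ hmI]
      rw [hfid _ hsI] at hs
      rw [hfid _ htI] at ht'
      -- geo x y ((s+t)/2) is a metric midpoint of geo x y s and geo x y t
      have hd1 : dist (G.geo x y s) (G.geo x y ((s+t)/2)) =
          dist (G.geo x y s) (G.geo x y t) / 2 := by
        rw [G.geo_dist x y s hsI _ hmI, G.geo_dist x y s hsI t htI]
        rw [show s - (s+t)/2 = (s-t)/2 by ring, abs_div]
        simp [abs_of_nonneg]
        ring
      have hd2 : dist (G.geo x y t) (G.geo x y ((s+t)/2)) =
          dist (G.geo x y s) (G.geo x y t) / 2 := by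
        rw [G.geo_dist x y t htI _ hmI, G.geo_dist x y s hsI t htI]
        rw [show t - (s+t)/2 = -((s-t)/2) by ring, abs_neg, abs_div]
        simp
        ring
      have hCN := hX (G.geo x y s) (G.geo x y t) z (G.geo x y ((s+t)/2)) hd1 hd2
      have hst : dist (G.geo x y s) (G.geo x y t) = |s - t| * dist x y :=
        G.geo_dist x y s hsI t htI
      have habs : (|s - t| * dist x y)^2 = (s-t)^2 * dist x y^2 := by
        rw [mul_pow, sq_abs]
      rw [hst, habs] at hCN
      calc dist z (G.geo x y ((s+t)/2)) ^ 2
          ≤ dist z (G.geo x y s)^2/2 + dist z (G.geo x y t)^2/2 - (s-t)^2 * dist x y^2/4 := by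
            linarith [hCN]
        _ ≤ ((1-s) * dist z x^2 + s * dist z y^2 - s*(1-s)*dist x y^2)/2 +
            ((1-t) * dist z x^2 + t * dist z y^2 - t*(1-t)*dist x y^2)/2 -
            (s-t)^2 * dist x y^2/4 := by linarith [hs, ht']
        _ = (1-(s+t)/2) * dist z x^2 + (s+t)/2 * dist z y^2 -
            (s+t)/2 * (1-(s+t)/2) * dist x y^2 := by ring
  have h2 := (hsub ht).2
  simp only [Set.mem_setOf_eq] at h2
  rwa [hfid t ht] at h2

/-- convexity of the metric between two geodesics (GCVX) -/
lemma gcvx (G : Geodesic X) (hX : CAT0 X) (x x' y y' : X) {t : ℝ} (ht : t ∈ Set.Icc (0:ℝ) 1) :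
    dist (G.geo x x' t) (G.geo y y' t) ≤ (1 - t) * dist x y + t * dist x' y' := by
  set f : ℝ → ℝ := fun s => min 1 (max 0 s) with hf
  have hfc : Continuous f := continuous_const.min (continuous_const.max continuous_id)
  have hfI : ∀ s : ℝ, f s ∈ Set.Icc (0:ℝ) 1 := fun s =>
    ⟨le_min (by norm_num) (le_max_left 0 s), min_le_left _ _⟩
  have hfid : ∀ s ∈ Set.Icc (0:ℝ) 1, f s = s := fun s hs => by
    simp only [hf, max_eq_right hs.1, min_eq_right hs.2]
  set S : Set ℝ := Set.Icc (0:ℝ) 1 ∩ {s |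
      dist (G.geo x x' (f s)) (G.geo y y' (f s)) ≤ (1 - s) * dist x y + s * dist x' y'} with hS
  have hsub : Set.Icc (0:ℝ) 1 ⊆ S := by
    apply dyadic_closure
    · apply IsClosed.inter isClosed_Icc
      exact isClosed_le (Continuous.dist
          ((geo_continuousOn G x x').comp_continuous hfc hfI)
          ((geo_continuousOn G y y').comp_continuous hfc hfI)) (by continuity)
    · refine ⟨⟨le_refl 0, zero_le_one⟩, ?_⟩
      simp only [Set.mem_setOf_eq]
      rw [hfid 0 ⟨le_refl 0, zero_le_one⟩, G.geo_zero, G.geo_zero]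
      simp
    · refine ⟨⟨zero_le_one, le_refl 1⟩, ?_⟩
      simp only [Set.mem_setOf_eq]
      rw [hfid 1 ⟨zero_le_one, le_refl 1⟩, G.geo_one, G.geo_one]
      simp
    · rintro s ⟨hsI, hs⟩ t' ⟨htI, ht'⟩
      simp only [Set.mem_setOf_eq] at hs ht'
      have hmI : (s + t')/2 ∈ Set.Icc (0:ℝ) 1 := ⟨by linarith [hsI.1, htI.1], by linarith [hsI.2, htI.2]⟩
      refine ⟨hmI, ?_⟩
      simp only [Set.mem_setOf_eq]
      rw [hfid _ hmI]
      rw [hfid _ hsI] at hs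
      rw [hfid _ htI] at ht'
      have key : ∀ a b : X, dist (G.geo a b s) (G.geo a b ((s+t')/2)) =
          dist (G.geo a b s) (G.geo a b t') / 2 ∧
          dist (G.geo a b t') (G.geo a b ((s+t')/2)) =
          dist (G.geo a b s) (G.geo a b t') / 2 := by
        intro a b
        constructor
        · rw [G.geo_dist a b s hsI _ hmI, G.geo_dist a b s hsI t' htI,
            show s - (s+t')/2 = (s-t')/2 by ring, abs_div]
          simp [abs_of_nonneg]; ring
        · rw [G.geo_dist a b t' htI _ hmI, G.geo_dist a b s hsI t' htI,
            show t' - (s+t')/2 = -((s-t')/2) by ring, abs_neg, abs_div]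
          simp; ring
      obtain ⟨k1, k2⟩ := key x x'
      obtain ⟨k3, k4⟩ := key y y'
      have := mid_contract2 G hX k1 k2 k3 k4
      calc dist (G.geo x x' ((s+t')/2)) (G.geo y y' ((s+t')/2)) ≤
            dist (G.geo x x' s) (G.geo y y' s) / 2 + dist (G.geo x x' t') (G.geo y y' t') / 2 :=
          this
        _ ≤ ((1 - s) * dist x y + s * dist x' y') / 2 +
            ((1 - t') * dist x y + t' * dist x' y') / 2 := by linarith
        _ = (1 - (s+t')/2) * dist x y + ((s+t')/2) * dist x' y' := by ring
  have h2 := (hsub ht).2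
  simp only [Set.mem_setOf_eq] at h2
  rwa [hfid t ht] at h2

/-- the firm projection inequality ♦ -/
lemma diamond (G : Geodesic X) (hX : CAT0 X) {A : Set X}
    (hconv : ∀ x ∈ A, ∀ y ∈ A, ∀ t ∈ Set.Icc (0:ℝ) 1, G.geo x y t ∈ A)
    {x p : X} (hp : p ∈ A) (hmin : ∀ z ∈ A, dist x p ≤ dist x z)
    {b : X} (hb : b ∈ A) : dist x p ^ 2 + dist p b ^ 2 ≤ dist x b ^ 2 := by
  have key : ∀ k : ℕ, ∀ b ∈ A, dist x p ^ 2 + (1 - (2:ℝ)⁻¹^k) * dist p b ^ 2 ≤ dist x b ^ 2 := by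
    intro k
    induction k with
    | zero =>
      intro b hb
      have := hmin b hb
      have h2 : dist x p ^ 2 ≤ dist x b ^ 2 := by nlinarith [dist_nonneg (x := x) (y := p)]
      simpa using h2
    | succ k ih =>
      intro b hb
      have hhalf : (1/2 : ℝ) ∈ Set.Icc (0:ℝ) 1 := by constructor <;> norm_num
      set m := G.geo p b (1/2) with hm
      have hmA : m ∈ A := hconv p hp b hb (1/2) hhalf
      have g1 : dist p m = dist p b / 2 := geo_half_left G p b
      have g2 : dist b m = dist p b / 2 := geo_half_right G p b
      have hCN := hX p b x m g1 g2
      have hIH := ih m hmA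
      rw [g1] at hIH
      have hq : ((2:ℝ)⁻¹^(k+1)) = (2:ℝ)⁻¹^k / 2 := by rw [pow_succ]; ring
      nlinarith [hCN, hIH]
  have hlim : Filter.Tendsto (fun k : ℕ => dist x p ^ 2 + (1 - (2:ℝ)⁻¹^k) * dist p b ^ 2)
      Filter.atTop (nhds (dist x p ^ 2 + (1 - 0) * dist p b ^ 2)) := by
    apply Filter.Tendsto.add tendsto_const_nhds
    apply Filter.Tendsto.mul_const
    exact (tendsto_const_nhds).sub (tendsto_pow_atTop_nhds_zero_of_lt_one (by norm_num) (by norm_num))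
  have := le_of_tendsto hlim (Filter.Eventually.of_forall (fun k => key k b hb))
  linarith [this]

/-- auxiliary sign lemma for the crossing parameter -/
lemma cross_nonneg {a b u v e f : ℝ} (ha : 0 < a) (hb : 0 < b) (he : 0 ≤ e) (hf : 0 ≤ f)
    (hu : u^2 + e^2 = a^2) (hv : v^2 + f^2 = b^2) (hcond : 0 < b*u + a*v) :
    0 ≤ u*f + v*e := by
  rcases le_or_gt 0 u with hu0 | hu0
  · rcases le_or_gt 0 v with hv0 | hv0
    · nlinarith [mul_nonneg hu0 hf, mul_nonneg hv0 he]
    · have h1 : a*(-v) < b*u := by linarith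
      have hav : 0 < a*(-v) := mul_pos ha (by linarith)
      have h2 : (a*(-v))^2 < (b*u)^2 := by nlinarith [h1, hav]
      have h3 : (e*(-v))^2 < (f*u)^2 := by nlinarith [h2, hu, hv]
      have h5 : 0 ≤ f*u + e*(-v) :=
        add_nonneg (mul_nonneg hf hu0) (mul_nonneg he (by linarith))
      nlinarith [h3, h5]
  · rcases le_or_gt 0 v with hv0 | hv0
    · have h1 : b*(-u) < a*v := by linarith
      have hbv : 0 < b*(-u) := mul_pos hb (by linarith)
      have h2 : (b*(-u))^2 < (a*v)^2 := by nlinarith [h1, hbv]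
      have h3 : (f*(-u))^2 < (e*v)^2 := by nlinarith [h2, hu, hv]
      have h5 : 0 ≤ e*v + f*(-u) :=
        add_nonneg (mul_nonneg he hv0) (mul_nonneg hf (by linarith))
      nlinarith [h3, h5]
    · exfalso
      nlinarith [mul_pos ha (neg_pos.2 hv0), mul_pos hb (neg_pos.2 hu0)]


end APBA
end Chunk2

section Chunk3b
set_option maxHeartbeats 1000000
namespace APBA

/-- choice of the crossing parameter g (pure real arithmetic) -/
lemma cs_g {q l A B D e f : ℝ}
    (hq : 0 < q) (hl : 0 < l) (hB : 0 < B) (hA : 0 < A) (hD : 0 < D)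
    (he0 : 0 ≤ e) (hf0 : 0 ≤ f)
    (he2 : e^2 = (2*A*B)^2 - (A^2+B^2-l^2)^2)
    (hf2 : f^2 = (2*q*B)^2 - (q^2+B^2-D^2)^2)
    (hC2 : 0 < A*(q^2+B^2-D^2) + q*(A^2+B^2-l^2))
    (hC3 : 0 < D*(2*B^2-(A^2+B^2-l^2)) + l*(2*B^2-(q^2+B^2-D^2))) :
    ∃ g : ℝ, 0 ≤ g ∧ g ≤ 2*B^2 ∧
      ((A^2+B^2-l^2) - g)*f - e*(g - (q^2+B^2-D^2)) = 0 ∧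
      0 ≤ ((A^2+B^2-l^2) - g)*(g - (q^2+B^2-D^2)) + e*f := by
  set u := A^2+B^2-l^2 with hud
  set v := q^2+B^2-D^2 with hvd
  rcases eq_or_lt_of_le (by positivity : (0:ℝ) ≤ e + f) with hef | hef
  · -- e = f = 0
    have he : e = 0 := by linarith [he0, hf0, hef.symm ▸ (le_refl (0:ℝ))]
    have hf : f = 0 := by linarith [he0, hf0]
    have hmax : 0 < u ∨ 0 < v := by
      by_contra h
      push_neg at h
      linarith [mul_nonpos_of_nonneg_of_nonpos hA.le h.2, mul_nonpos_of_nonneg_of_nonpos hq.le h.1, hC2]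
    have hmin : u < 2*B^2 ∨ v < 2*B^2 := by
      by_contra h
      push_neg at h
      linarith [mul_nonpos_of_nonneg_of_nonpos hD.le (by linarith [h.1] : 2*B^2 - u ≤ 0),
        mul_nonpos_of_nonneg_of_nonpos hl.le (by linarith [h.2] : 2*B^2 - v ≤ 0), hC3]
    refine ⟨max 0 (min u v), le_max_left _ _, ?_, by rw [he, hf]; ring, ?_⟩
    · rcases le_total u v with h' | h'
      · rw [min_eq_left h']
        rcases hmin with h'' | h''
        · exact max_le (by positivity) h''.le
        · exact max_le (by positivity) (by linarith)
      · rw [min_eq_right h']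
        rcases hmin with h'' | h''
        · exact max_le (by positivity) (by linarith)
        · exact max_le (by positivity) h''.le
    · rw [he, hf]
      rcases le_total 0 (min u v) with h' | h'
      · rw [max_eq_right h']
        rcases le_total u v with h'' | h''
        · rw [min_eq_left h'']; simp
        · rw [min_eq_right h'']; simp
      · rw [max_eq_left h']
        rcases le_total u v with h'' | h''
        · -- min = u ≤ 0, so v > 0 (else both ≤ 0 contra hmax)
          rw [min_eq_left h''] at h'
          have hv' : 0 < v := by
            rcases hmax with h3 | h3
            · linarith
            · exact h3
          have : 0 ≤ (u - 0)*(0 - v) := by nlinarith [mul_nonneg (neg_nonneg.2 h') hv'.le]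
          simpa using this
        · rw [min_eq_right h''] at h'
          have hu' : 0 < u := by
            rcases hmax with h3 | h3
            · exact h3
            · linarith
          have : 0 ≤ (u - 0)*(0 - v) := by nlinarith [mul_nonneg hu'.le (neg_nonneg.2 h')]
          simpa using this
  · -- e + f > 0
    have hnum1 : 0 ≤ u*f + v*e := by
      apply cross_nonneg (a := 2*A*B) (b := 2*q*B) (by positivity) (by positivity) he0 hf0
        (by linarith [he2]) (by linarith [hf2])
      linarith [mul_pos hB hC2]
    have hid1 : (2*B^2 - u)^2 + e^2 = (2*l*B)^2 := by
      rw [he2, hud]; ring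
    have hid2 : (2*B^2 - v)^2 + f^2 = (2*D*B)^2 := by
      rw [hf2, hvd]; ring
    have hnum2 : 0 ≤ (2*B^2 - u)*f + (2*B^2 - v)*e := by
      apply cross_nonneg (a := 2*l*B) (b := 2*D*B) (by positivity) (by positivity) he0 hf0
        hid1 hid2
      linarith [mul_pos hB hC3]
    refine ⟨(u*f + v*e)/(e+f), div_nonneg hnum1 hef.le, ?_, ?_, ?_⟩
    · rw [div_le_iff₀ hef]
      linarith [hnum2]
    · field_simp
      ring
    · set g := (u*f + v*e)/(e+f) with hgd
      have hcr : (u - g)*f - e*(g - v) = 0 := by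
        rw [hgd]; field_simp; ring
      rcases eq_or_lt_of_le hf0 with hf' | hf'
      · -- f = 0, e > 0
        have he' : 0 < e := by linarith
        have hgv : g = v := by
          have := hcr
          rw [← hf'] at this
          have h2 : e*(g - v) = 0 := by linarith [this]
          rcases mul_eq_zero.1 h2 with h3 | h3
          · linarith
          · linarith
        rw [hgv, ← hf']
        ring_nf
        exact le_refl 0
      · -- f > 0
        have hmul : 0 ≤ (((u - g)*(g - v)) + e*f) * f := by
          have h2 : (u-g)*f = e*(g-v) := by linarith [hcr]
          calc (0:ℝ) ≤ e*(g-v)^2 + e*f^2 := by positivity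
            _ = (((u - g)*(g - v)) + e*f) * f := by
                rw [show (((u - g)*(g - v)) + e*f) * f = ((u-g)*f)*(g-v) + e*f^2 by ring, h2]
                ring
        nlinarith [hmul, hf']


end APBA
end Chunk3b

section Chunk3c
set_option maxHeartbeats 1000000
namespace APBA

lemma real_le_of_sq_le_sq {x r : ℝ} (h : x^2 ≤ r^2) (hr : 0 ≤ r) : x ≤ r :=
  (abs_le_of_sq_le_sq' h hr).2

/-- final assembly of the quadrilateral inequality (pure real arithmetic) -/
lemma cs_final {q l A B C D e f g s1 s2 : ℝ}
    (hq : 0 < q) (hl : 0 < l) (hB : 0 < B) (hA : 0 < A) (hD : 0 < D)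
    (hC0 : 0 ≤ C) (hs10 : 0 ≤ s1) (hs20 : 0 ≤ s2)
    (he0 : 0 ≤ e) (hf0 : 0 ≤ f)
    (he2 : e^2 = (2*A*B)^2 - (A^2+B^2-l^2)^2)
    (hf2 : f^2 = (2*q*B)^2 - (q^2+B^2-D^2)^2)
    (hcross : ((A^2+B^2-l^2) - g)*f - e*(g - (q^2+B^2-D^2)) = 0)
    (hdot : 0 ≤ ((A^2+B^2-l^2) - g)*(g - (q^2+B^2-D^2)) + e*f)
    (hs1 : s1^2 ≤ (1 - g/(2*B^2))*A^2 + (g/(2*B^2))*l^2 - (g/(2*B^2))*(1-g/(2*B^2))*B^2)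
    (hs2 : s2^2 ≤ (1 - g/(2*B^2))*q^2 + (g/(2*B^2))*D^2 - (g/(2*B^2))*(1-g/(2*B^2))*B^2)
    (hC : C ≤ s1 + s2) :
    B^2 + C^2 ≤ A^2 + D^2 + 2*q*l := by
  set u := A^2+B^2-l^2 with hud
  set v := q^2+B^2-D^2 with hvd
  set Q1 := (u - g)^2 + e^2 with hQ1d
  set Q2 := (v - g)^2 + f^2 with hQ2d
  have hB2 : (0:ℝ) < 2*B^2 := by positivity
  have hQ10 : 0 ≤ Q1 := by positivity
  have hQ20 : 0 ≤ Q2 := by positivity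
  have hs1' : (2*B*s1)^2 ≤ Q1 := by
    have hexp : 4*B^2*((1 - g/(2*B^2))*A^2 + (g/(2*B^2))*l^2 - (g/(2*B^2))*(1-g/(2*B^2))*B^2)
        = (u - g)^2 + ((2*A*B)^2 - u^2) := by
      field_simp
      rw [hud]
      ring
    have h1 := mul_le_mul_of_nonneg_left hs1 (by positivity : (0:ℝ) ≤ 4*B^2)
    rw [hexp] at h1
    have h2 : Q1 = (u - g)^2 + ((2*A*B)^2 - u^2) := by rw [hQ1d, he2]
    linarith only [h1, h2]
  have hs2' : (2*B*s2)^2 ≤ Q2 := by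
    have hexp : 4*B^2*((1 - g/(2*B^2))*q^2 + (g/(2*B^2))*D^2 - (g/(2*B^2))*(1-g/(2*B^2))*B^2)
        = (v - g)^2 + ((2*q*B)^2 - v^2) := by
      field_simp
      rw [hvd]
      ring
    have h1 := mul_le_mul_of_nonneg_left hs2 (by positivity : (0:ℝ) ≤ 4*B^2)
    rw [hexp] at h1
    have h2 : Q2 = (v - g)^2 + ((2*q*B)^2 - v^2) := by rw [hQ2d, hf2]
    linarith only [h1, h2]
  set dot := (u - g)*(g - v) + e*f with hdotd
  have hLag : Q1 * Q2 = dot^2 := by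
    have h1 : Q1 * Q2 = ((u-g)*(g-v) + e*f)^2 + ((u-g)*f - e*(g-v))^2 := by
      rw [hQ1d, hQ2d]; ring
    rw [h1, hcross]
    ring
  have hprod : (2*B*s1)*(2*B*s2) ≤ dot := by
    have k1 : 2*B*s1 ≤ Real.sqrt Q1 := by
      rw [show (2*B*s1) = Real.sqrt ((2*B*s1)^2) by rw [Real.sqrt_sq (by positivity)]]
      exact Real.sqrt_le_sqrt hs1'
    have k2 : 2*B*s2 ≤ Real.sqrt Q2 := by
      rw [show (2*B*s2) = Real.sqrt ((2*B*s2)^2) by rw [Real.sqrt_sq (by positivity)]]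
      exact Real.sqrt_le_sqrt hs2'
    calc (2*B*s1)*(2*B*s2) ≤ Real.sqrt Q1 * Real.sqrt Q2 :=
          mul_le_mul k1 k2 (by positivity) (Real.sqrt_nonneg _)
      _ = Real.sqrt (Q1 * Q2) := (Real.sqrt_mul hQ10 _).symm
      _ = Real.sqrt (dot^2) := by rw [hLag]
      _ = dot := by rw [Real.sqrt_sq hdot]
  have hCC : 4*B^2*C^2 ≤ (u - v)^2 + (e + f)^2 := by
    have h1 : C*C ≤ (s1+s2)*(s1+s2) := mul_self_le_mul_self hC0 hC
    have h3 := mul_le_mul_of_nonneg_left h1 (by positivity : (0:ℝ) ≤ 4*B^2)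
    have h5 : Q1 + Q2 + 2*dot = (u - v)^2 + (e + f)^2 := by
      rw [hQ1d, hQ2d, hdotd]; ring
    linarith only [h3, hs1', hs2', hprod, h5]
  have hpcs : v*(2*B^2 - u) + e*f ≤ 4*B^2*(q*l) := by
    have hident1 : (2*B^2 - u)^2 + e^2 = (2*l*B)^2 := by rw [he2, hud]; ring
    have hident2 : v^2 + f^2 = (2*q*B)^2 := by rw [hf2]; ring
    have hsq : (v*(2*B^2 - u) + e*f)^2 ≤ (4*B^2*(q*l))^2 := by
      have h1 : (v*(2*B^2 - u) + e*f)^2 + (v*e - f*(2*B^2 - u))^2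
          = (v^2 + f^2)*((2*B^2 - u)^2 + e^2) := by ring
      rw [hident1, hident2] at h1
      have h2 := sq_nonneg (v*e - f*(2*B^2 - u))
      linarith only [h1, h2]
    exact real_le_of_sq_le_sq hsq (by positivity)
  have key : 4*B^2*B^2 + (u-v)^2 + (e+f)^2 ≤ 4*B^2*A^2 + 4*B^2*D^2 + 8*B^2*(q*l) := by
    have hee : e^2 = 4*A^2*B^2 - u^2 := by rw [he2]; ring
    have hff : f^2 = 4*q^2*B^2 - v^2 := by rw [hf2]; ring
    have hDD : 4*B^2*D^2 = (2*B^2 - v)^2 + f^2 := by rw [hff, hvd]; ring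
    linarith only [hpcs, hee, hff, hDD]
  have hfin : 4*B^2*(B^2 + C^2) ≤ 4*B^2*(A^2 + D^2 + 2*(q*l)) := by
    linarith only [hCC, key]
  have := (mul_le_mul_iff_right₀ (show (0:ℝ) < 4*B^2 by positivity)).mp hfin
  linarith only [this]

end APBA
end Chunk3c

section Chunk3
set_option maxHeartbeats 2000000
namespace APBA

variable {X : Type*} [MetricSpace X]

/-- the quadrilateral (Cauchy–Schwarz) inequality in CAT(0) spaces -/
lemma cs (G : Geodesic X) (hX : CAT0 X) (a b c d : X) :
    dist a d ^ 2 + dist b c ^ 2 ≤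
      dist a c ^ 2 + dist b d ^ 2 + 2 * dist a b * dist c d := by
  -- notation
  have hq0 : (0:ℝ) ≤ dist a b := dist_nonneg
  have hl0 : (0:ℝ) ≤ dist c d := dist_nonneg
  have hA0 : (0:ℝ) ≤ dist a c := dist_nonneg
  have hB0 : (0:ℝ) ≤ dist a d := dist_nonneg
  have hC0 : (0:ℝ) ≤ dist b c := dist_nonneg
  have hD0 : (0:ℝ) ≤ dist b d := dist_nonneg
  -- degenerate cases
  rcases eq_or_lt_of_le hq0 with hq | hq
  · -- a = b
    have hab : a = b := by rw [← dist_eq_zero]; exact hq.symm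
    subst hab
    have h1 : dist a d ^2 = dist a d^2 := rfl
    nlinarith [dist_nonneg (x := a) (y := c), dist_nonneg (x := c) (y := d)]
  rcases eq_or_lt_of_le hl0 with hl | hl
  · have hcd : c = d := by rw [← dist_eq_zero]; exact hl.symm
    subst hcd
    nlinarith [dist_nonneg (x := a) (y := b)]
  rcases eq_or_lt_of_le hB0 with hB | hB
  · -- a = d
    have had : a = d := by rw [← dist_eq_zero]; exact hB.symm
    have h1 : dist b c ≤ dist b a + dist a c := dist_triangle _ _ _
    have h2 : dist b a = dist a b := dist_comm _ _
    have h3 : dist c d = dist a c := by rw [← had, dist_comm]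
    have h4 : dist a d = 0 := hB.symm
    have h5 : dist b d = dist a b := by rw [← had, dist_comm]
    nlinarith [h1, h2, h3, h4, h5, dist_nonneg (x := b) (y := c), dist_nonneg (x := a) (y := c), dist_nonneg (x := a) (y := b)]
  rcases eq_or_lt_of_le hA0 with hA | hA
  · -- a = c
    have hac : a = c := by rw [← dist_eq_zero]; exact hA.symm
    have t1 : dist a d ≤ dist a b + dist b d := dist_triangle _ _ _
    have t2 : dist a b ≤ dist a d + dist d b := dist_triangle _ _ _
    have h2 : dist b c = dist a b := by rw [← hac, dist_comm]
    have h3 : dist d b = dist b d := dist_comm _ _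
    have h4 : dist a c = 0 := hA.symm
    have h5 : dist c d = dist a d := by rw [← hac]
    nlinarith [t1, t2, h2, h3, h4, h5]
  rcases eq_or_lt_of_le hD0 with hD | hD
  · -- b = d
    have hbd : b = d := by rw [← dist_eq_zero]; exact hD.symm
    have t1 : dist a d ≤ dist a c + dist c d := dist_triangle _ _ _
    have t2 : dist a c ≤ dist a d + dist d c := dist_triangle _ _ _
    have h3 : dist d c = dist c d := dist_comm _ _
    have h4 : dist b d = 0 := hD.symm
    have h5 : dist b c = dist c d := by rw [hbd, dist_comm]
    have h6 : dist a d = dist a b := by rw [hbd]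
    have t3 : dist c d ≤ dist c a + dist a d := dist_triangle _ _ _
    have h7 : dist c a = dist a c := dist_comm _ _
    nlinarith [t1, t3, h3, h4, h5, h6, h7, hA0]
  -- main case: all distances positive
  -- triangle inequalities
  have tACl : dist a c ≤ dist a d + dist c d := by
    calc dist a c ≤ dist a d + dist d c := dist_triangle _ _ _
      _ = dist a d + dist c d := by rw [dist_comm d c]
  have tlAB : dist c d ≤ dist a c + dist a d := by
    calc dist c d ≤ dist c a + dist a d := dist_triangle _ _ _
      _ = dist a c + dist a d := by rw [dist_comm c a]
  have tB1 : dist a d ≤ dist a c + dist c d := dist_triangle _ _ _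
  have tD1 : dist b d ≤ dist a b + dist a d := by
    calc dist b d ≤ dist b a + dist a d := dist_triangle _ _ _
      _ = dist a b + dist a d := by rw [dist_comm b a]
  have tq1 : dist a b ≤ dist a d + dist b d := by
    calc dist a b ≤ dist a d + dist d b := dist_triangle _ _ _
      _ = dist a d + dist b d := by rw [dist_comm d b]
  have tB2 : dist a d ≤ dist a b + dist b d := dist_triangle _ _ _
  by_cases hC2 : dist a c*(dist a b^2+dist a d^2-dist b d^2) +
      dist a b*(dist a c^2+dist a d^2-dist c d^2) ≤ 0
  · -- case 2 : through the vertex a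
    have tC : dist b c ≤ dist a b + dist a c := by
      calc dist b c ≤ dist b a + dist a c := dist_triangle _ _ _
        _ = dist a b + dist a c := by rw [dist_comm b a]
    have h1 : (0:ℝ) ≤ (dist a d - (dist a c - dist c d))*(dist a d + (dist a c - dist c d)) :=
      mul_nonneg (by linarith) (by linarith)
    have hAl2 : (dist a c - dist c d)^2 ≤ dist a d^2 := by nlinarith [h1]
    have hint : (0:ℝ) ≤ dist a b*(dist a d^2 - (dist a c - dist c d)^2) :=
      mul_nonneg hq.le (by linarith)
    have hmul : dist a c*((dist a b^2+dist a d^2-dist b d^2) +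
        2*dist a b*dist a c - 2*dist a b*dist c d) ≤ 0 := by nlinarith [hC2, hint]
    have hexpr : (dist a b^2+dist a d^2-dist b d^2) +
        2*dist a b*dist a c - 2*dist a b*dist c d ≤ 0 := by
      have h3 : dist a c*((dist a b^2+dist a d^2-dist b d^2) +
          2*dist a b*dist a c - 2*dist a b*dist c d) ≤ dist a c*0 := by linarith [hmul]
      exact le_of_mul_le_mul_left h3 hA
    have h2 : dist b c*dist b c ≤ (dist a b + dist a c)*(dist a b + dist a c) :=
      mul_self_le_mul_self hC0 tC
    nlinarith [h2, hexpr]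
  by_cases hC3 : dist b d*(2*dist a d^2-(dist a c^2+dist a d^2-dist c d^2)) +
      dist c d*(2*dist a d^2-(dist a b^2+dist a d^2-dist b d^2)) ≤ 0
  · -- case 3 : through the vertex d
    have tC : dist b c ≤ dist b d + dist c d := by
      calc dist b c ≤ dist b d + dist d c := dist_triangle _ _ _
        _ = dist b d + dist c d := by rw [dist_comm d c]
    have h1 : (0:ℝ) ≤ (dist a d - (dist b d - dist a b))*(dist a d + (dist b d - dist a b)) :=
      mul_nonneg (by linarith) (by linarith)
    have hDq2 : (dist b d - dist a b)^2 ≤ dist a d^2 := by nlinarith [h1]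
    have hint : (0:ℝ) ≤ dist c d*(dist a d^2 - (dist b d - dist a b)^2) :=
      mul_nonneg hl.le (by linarith)
    have hmul : dist b d*((dist a d^2 + dist c d^2 - dist a c^2) +
        2*dist b d*dist c d - 2*dist a b*dist c d) ≤ 0 := by nlinarith [hC3, hint]
    have hexpr : (dist a d^2 + dist c d^2 - dist a c^2) +
        2*dist b d*dist c d - 2*dist a b*dist c d ≤ 0 := by
      have h3 : dist b d*((dist a d^2 + dist c d^2 - dist a c^2) +
          2*dist b d*dist c d - 2*dist a b*dist c d) ≤ dist b d*0 := by linarith [hmul]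
      exact le_of_mul_le_mul_left h3 hD
    have h2 : dist b c*dist b c ≤ (dist b d + dist c d)*(dist b d + dist c d) :=
      mul_self_le_mul_self hC0 tC
    nlinarith [h2, hexpr]
  -- case 1 : crossing
  push_neg at hC2 hC3
  have hu2 : (dist a c^2+dist a d^2-dist c d^2)^2 ≤ (2*dist a c*dist a d)^2 := by
    have hh1 : (0:ℝ) ≤ (dist c d - (dist a c - dist a d))*(dist c d + (dist a c - dist a d)) :=
      mul_nonneg (by linarith) (by linarith)
    have hh2 : (0:ℝ) ≤ ((dist a c + dist a d) - dist c d)*((dist a c + dist a d) + dist c d) :=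
      mul_nonneg (by linarith) (by linarith)
    nlinarith [mul_nonneg hh1 hh2]
  have hv2 : (dist a b^2+dist a d^2-dist b d^2)^2 ≤ (2*dist a b*dist a d)^2 := by
    have hh1 : (0:ℝ) ≤ (dist b d - (dist a b - dist a d))*(dist b d + (dist a b - dist a d)) :=
      mul_nonneg (by linarith) (by linarith)
    have hh2 : (0:ℝ) ≤ ((dist a b + dist a d) - dist b d)*((dist a b + dist a d) + dist b d) :=
      mul_nonneg (by linarith) (by linarith)
    nlinarith [mul_nonneg hh1 hh2]
  set e := Real.sqrt ((2*dist a c*dist a d)^2 - (dist a c^2+dist a d^2-dist c d^2)^2) with hed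
  set f := Real.sqrt ((2*dist a b*dist a d)^2 - (dist a b^2+dist a d^2-dist b d^2)^2) with hfd
  have he0 : 0 ≤ e := Real.sqrt_nonneg _
  have hf0 : 0 ≤ f := Real.sqrt_nonneg _
  have he2 : e^2 = (2*dist a c*dist a d)^2 - (dist a c^2+dist a d^2-dist c d^2)^2 :=
    Real.sq_sqrt (by linarith [hu2])
  have hf2 : f^2 = (2*dist a b*dist a d)^2 - (dist a b^2+dist a d^2-dist b d^2)^2 :=
    Real.sq_sqrt (by linarith [hv2])
  obtain ⟨g, hg0, hg2, hcross, hdot⟩ :=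
    cs_g (q := dist a b) (l := dist c d) (A := dist a c) (B := dist a d) (D := dist b d)
      hq hl hB hA hD he0 hf0 he2 hf2 hC2 hC3
  have hτmem : g/(2*dist a d^2) ∈ Set.Icc (0:ℝ) 1 := by
    constructor
    · positivity
    · rw [div_le_one (by positivity)]
      exact hg2
  have hs1 := cvx G hX c a d hτmem
  rw [dist_comm c a] at hs1
  have hs2 := cvx G hX b a d hτmem
  rw [dist_comm b a] at hs2
  have hCb : dist b c ≤ dist c (G.geo a d (g/(2*dist a d^2))) +
      dist b (G.geo a d (g/(2*dist a d^2))) := by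
    calc dist b c ≤ dist b (G.geo a d (g/(2*dist a d^2))) +
          dist (G.geo a d (g/(2*dist a d^2))) c := dist_triangle _ _ _
      _ = dist c (G.geo a d (g/(2*dist a d^2))) +
          dist b (G.geo a d (g/(2*dist a d^2))) := by
          rw [dist_comm (G.geo a d (g/(2*dist a d^2))) c]; ring
  exact cs_final hq hl hB hA hD hC0 dist_nonneg dist_nonneg he0 hf0 he2 hf2 hcross hdot
    hs1 hs2 hCb

end APBA
end Chunk3

section Chunk4
namespace APBA

variable {X : Type*} [MetricSpace X]

/-- firm nonexpansiveness of nearest-point maps onto convex sets -/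
lemma firm (G : Geodesic X) (hX : CAT0 X) {A : Set X}
    (hconv : ∀ x ∈ A, ∀ y ∈ A, ∀ t ∈ Set.Icc (0:ℝ) 1, G.geo x y t ∈ A)
    {x p y p' : X} (hp : p ∈ A) (hminp : ∀ z ∈ A, dist x p ≤ dist x z)
    (hp' : p' ∈ A) (hminp' : ∀ z ∈ A, dist y p' ≤ dist y z) :
    dist p p' ^ 2 ≤ dist x y ^ 2 - (dist x p - dist y p')^2 := by
  have h1 := diamond G hX hconv hp hminp hp'
  have h2 := diamond G hX hconv hp' hminp' hp
  have h3 := cs G hX x p y p'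
  have c1 : dist p' p ^ 2 = dist p p' ^ 2 := by rw [dist_comm]
  have c2 : dist p y ^ 2 = dist y p ^ 2 := by rw [dist_comm]
  -- h3 : dist x p'^2 + dist p y^2 ≤ dist x y^2 + dist p p'^2 + 2*dist x p*dist y p'
  linarith [h1, h2, h3]

lemma proj_nonexpansive (G : Geodesic X) (hX : CAT0 X) {A : Set X}
    (hconv : ∀ x ∈ A, ∀ y ∈ A, ∀ t ∈ Set.Icc (0:ℝ) 1, G.geo x y t ∈ A)
    {x p y p' : X} (hp : p ∈ A) (hminp : ∀ z ∈ A, dist x p ≤ dist x z)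
    (hp' : p' ∈ A) (hminp' : ∀ z ∈ A, dist y p' ≤ dist y z) :
    dist p p' ≤ dist x y := by
  have h := firm G hX hconv hp hminp hp' hminp'
  apply dist_le_of_sq_le_sq _ dist_nonneg
  nlinarith [sq_nonneg (dist x p - dist y p')]

end APBA
end Chunk4

section Chunk5
namespace APBA
open Filter

/-- boundedness helpers -/
lemma bddu {u : ℕ → ℝ} {C : ℝ} (hb : ∀ n, u n ≤ C) :
    IsBoundedUnder (· ≤ ·) atTop u := isBoundedUnder_of ⟨C, hb⟩

lemma cobddu {u : ℕ → ℝ} (h0 : ∀ n, 0 ≤ u n) :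
    IsCoboundedUnder (· ≤ ·) atTop u :=
  isCoboundedUnder_le_of_eventually_le atTop (x := 0) (Eventually.of_forall h0)

lemma limsup_nonneg' {u : ℕ → ℝ} (h0 : ∀ n, 0 ≤ u n) {C : ℝ} (hb : ∀ n, u n ≤ C) :
    0 ≤ limsup u atTop :=
  le_limsup_of_frequently_le (Frequently.of_forall h0) (bddu hb)

lemma limsup_mono' {u v : ℕ → ℝ} (h : ∀ᶠ n in atTop, u n ≤ v n)
    (h0 : ∀ n, 0 ≤ u n) {C : ℝ} (hb : ∀ n, v n ≤ C) :
    limsup u atTop ≤ limsup v atTop :=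
  limsup_le_limsup h (cobddu h0) (bddu hb)

lemma limsup_le_const {u : ℕ → ℝ} (h0 : ∀ n, 0 ≤ u n) {c : ℝ} (h : ∀ᶠ n in atTop, u n ≤ c) :
    limsup u atTop ≤ c :=
  limsup_le_of_le (cobddu h0) h

lemma limsup_shift {u : ℕ → ℝ} (k : ℕ) :
    limsup (fun n => u (n + k)) atTop = limsup u atTop := by
  conv_rhs => rw [← Filter.map_add_atTop_eq_nat k]
  unfold Filter.limsup Filter.limsSup
  simp [Filter.eventually_map]

lemma limsup_subseq_le {u : ℕ → ℝ} (h0 : ∀ n, 0 ≤ u n) {C : ℝ} (hb : ∀ n, u n ≤ C)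
    {φ : ℕ → ℕ} (hφ : StrictMono φ) :
    limsup (fun n => u (φ n)) atTop ≤ limsup u atTop := by
  apply le_of_forall_gt_imp_ge_of_dense
  intro c hc
  have h1 : ∀ᶠ n in atTop, u n < c := eventually_lt_of_limsup_lt hc (bddu hb)
  have h2 : ∀ᶠ n in atTop, u (φ n) < c := hφ.tendsto_atTop.eventually h1
  exact limsup_le_const (fun n => h0 _) (h2.mono fun n h => h.le)

lemma limsup_of_tendsto {u : ℕ → ℝ} {L : ℝ} (h : Tendsto u atTop (nhds L)) :
    limsup u atTop = L := h.limsup_eq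

lemma limsup_add_le_of_tendsto_zero {u v : ℕ → ℝ} (h0 : ∀ n, 0 ≤ u n) {C : ℝ}
    (hb : ∀ n, u n ≤ C) (hv : Tendsto v atTop (nhds 0)) (hv0 : ∀ n, 0 ≤ v n) :
    limsup (fun n => u n + v n) atTop ≤ limsup u atTop := by
  apply le_of_forall_gt_imp_ge_of_dense
  intro c hc
  obtain ⟨ε, hε, hcε⟩ : ∃ ε > 0, limsup u atTop + ε ≤ c := by
    refine ⟨(c - limsup u atTop)/2, by linarith, by linarith⟩
  have h1 : ∀ᶠ n in atTop, u n < limsup u atTop + ε/2 := by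
    apply eventually_lt_of_limsup_lt _ (bddu hb)
    linarith
  have h2 : ∀ᶠ n in atTop, |v n| < ε/2 := by
    have := Metric.tendsto_atTop.1 hv (ε/2) (by linarith)
    obtain ⟨N, hN⟩ := this
    exact eventually_atTop.2 ⟨N, fun n hn => by simpa [Real.dist_eq] using hN n hn⟩
  apply limsup_le_of_le (cobddu (fun n => add_nonneg (h0 n) (hv0 n)))
  filter_upwards [h1, h2] with n hn1 hn2
  have : v n ≤ ε/2 := le_of_lt (lt_of_abs_lt hn2)
  linarith

lemma limsup_sq {u : ℕ → ℝ} (h0 : ∀ n, 0 ≤ u n) {C : ℝ} (hb : ∀ n, u n ≤ C) :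
    limsup (fun n => u n ^ 2) atTop = (limsup u atTop) ^ 2 := by
  have hL0 : 0 ≤ limsup u atTop := limsup_nonneg' h0 hb
  have hC0 : 0 ≤ C := le_trans (h0 0) (hb 0)
  apply le_antisymm
  · apply le_of_forall_gt_imp_ge_of_dense
    intro c hc
    -- find ε with (L+ε)^2 ≤ c
    have hLc : (limsup u atTop)^2 < c := hc
    obtain ⟨ε, hε, hcε⟩ : ∃ ε > 0, (limsup u atTop + ε)^2 ≤ c := by
      set L := limsup u atTop with hLd
      have hdiv : 0 < (c - L^2)/(2*L + 2) := div_pos (by linarith [hLc]) (by linarith [hL0])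
      refine ⟨min 1 ((c - L^2)/(2*L + 2)), lt_min one_pos hdiv, ?_⟩
      set ε := min 1 ((c - L^2)/(2*L + 2)) with hεd
      have hε1 : ε ≤ 1 := min_le_left _ _
      have hε2 : ε ≤ (c - L^2)/(2*L + 2) := min_le_right _ _
      have hε0 : 0 < ε := lt_min one_pos hdiv
      have : (L + ε)^2 = L^2 + ε*(2*L + ε) := by ring
      rw [this]
      have h2 : ε*(2*L + ε) ≤ ε*(2*L + 2) := by nlinarith
      have h3 : ε*(2*L+2) ≤ c - L^2 := by
        rw [← div_mul_cancel₀ (c - L^2) (show (2*L+2) ≠ 0 by positivity)]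
        exact mul_le_mul_of_nonneg_right hε2 (by positivity)
      linarith
    have h1 : ∀ᶠ n in atTop, u n < limsup u atTop + ε :=
      eventually_lt_of_limsup_lt (by linarith) (bddu hb)
    apply limsup_le_const (fun n => sq_nonneg _)
    filter_upwards [h1] with n hn
    calc u n ^2 ≤ (limsup u atTop + ε)^2 := by nlinarith [h0 n]
      _ ≤ c := hcε
  · -- (limsup u)^2 ≤ limsup u²
    set M := limsup (fun n => u n^2) atTop with hM
    have hbsq : ∀ n, u n^2 ≤ C^2 := fun n => by nlinarith [hb n, h0 n]
    have hM0 : 0 ≤ M := limsup_nonneg' (fun n => sq_nonneg _) hbsq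
    apply le_of_forall_pos_le_add
    intro ε hε
    have h1 : ∀ᶠ n in atTop, u n ^2 < M + ε :=
      eventually_lt_of_limsup_lt (by linarith) (bddu hbsq)
    have h2 : limsup u atTop ≤ Real.sqrt (M + ε) := by
      apply limsup_le_const h0
      filter_upwards [h1] with n hn
      calc u n = Real.sqrt (u n^2) := (Real.sqrt_sq (h0 n)).symm
        _ ≤ Real.sqrt (M + ε) := Real.sqrt_le_sqrt hn.le
    calc (limsup u atTop)^2 ≤ (Real.sqrt (M + ε))^2 := by
          apply pow_le_pow_left₀ hL0 h2
      _ = M + ε := Real.sq_sqrt (by linarith)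

end APBA
end Chunk5

section Chunk6
namespace APBA
open Filter

variable {X : Type*} [MetricSpace X]

/-- the asymptotic radius function -/
noncomputable def psi (s : ℕ → X) (z : X) : ℝ := limsup (fun n => dist z (s n)) atTop

lemma limsup_add_const (u : ℕ → ℝ) (c : ℝ) (h0 : ∀ n, 0 ≤ u n) {C : ℝ} (hb : ∀ n, u n ≤ C) :
    limsup (fun n => u n + c) atTop = limsup u atTop + c := by
  have hmono : Monotone (fun x : ℝ => x + c) := fun a b h => by simpa using add_le_add_right h c
  have := hmono.map_limsup_of_continuousAt (F := atTop) u
    ((continuous_add_right c).continuousAt) (bddu hb) (cobddu h0)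
  exact this.symm

lemma limsup_add_le' {u v : ℕ → ℝ} (hu0 : ∀ n, 0 ≤ u n) (hv0 : ∀ n, 0 ≤ v n)
    {C : ℝ} (hbu : ∀ n, u n ≤ C) {C' : ℝ} (hbv : ∀ n, v n ≤ C') :
    limsup (fun n => u n + v n) atTop ≤ limsup u atTop + limsup v atTop := by
  apply le_of_forall_pos_le_add
  intro ε hε
  have h1 : ∀ᶠ n in atTop, u n < limsup u atTop + ε/2 :=
    eventually_lt_of_limsup_lt (by linarith [limsup_nonneg' hu0 hbu]) (bddu hbu)
  have h2 : ∀ᶠ n in atTop, v n < limsup v atTop + ε/2 :=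
    eventually_lt_of_limsup_lt (by linarith [limsup_nonneg' hv0 hbv]) (bddu hbv)
  apply limsup_le_const (fun n => add_nonneg (hu0 n) (hv0 n))
  filter_upwards [h1, h2] with n k1 k2
  linarith

section Center
variable {s : ℕ → X} {x0 : X} {C : ℝ}

lemma psi_bnd (hb : ∀ n, dist x0 (s n) ≤ C) (z : X) : ∀ n, dist z (s n) ≤ dist z x0 + C := fun n =>
  le_trans (dist_triangle _ _ _) (by linarith [hb n])

lemma psi_nonneg (hb : ∀ n, dist x0 (s n) ≤ C) (z : X) : 0 ≤ psi s z :=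
  limsup_nonneg' (fun n => dist_nonneg) (psi_bnd hb z)

lemma psi_lip (hb : ∀ n, dist x0 (s n) ≤ C) (z z' : X) : psi s z ≤ psi s z' + dist z z' := by
  have h1 : ∀ n, dist z (s n) ≤ dist z' (s n) + dist z z' := fun n => by
    calc dist z (s n) ≤ dist z z' + dist z' (s n) := dist_triangle _ _ _
      _ = dist z' (s n) + dist z z' := by ring
  calc psi s z ≤ limsup (fun n => dist z' (s n) + dist z z') atTop :=
        limsup_mono' (C := dist z' x0 + C + dist z z') (Eventually.of_forall h1)
          (fun n => dist_nonneg)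
          (fun n => by linarith [psi_bnd hb z' n])
    _ = psi s z' + dist z z' :=
        limsup_add_const _ _ (fun n => dist_nonneg) (psi_bnd hb z')

/-- CN inequality for asymptotic radii -/
lemma psi_cn (G : Geodesic X) (hX : CAT0 X) (hb : ∀ n, dist x0 (s n) ≤ C) (z z' : X) :
    psi s (G.geo z z' (1/2)) ^ 2 ≤ psi s z ^2 / 2 + psi s z' ^2 / 2 - dist z z' ^2 / 4 := by
  set m := G.geo z z' (1/2) with hm
  have g1 : dist z m = dist z z' / 2 := geo_half_left G z z'
  have g2 : dist z' m = dist z z' / 2 := geo_half_right G z z'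
  have hpt : ∀ n, dist m (s n) ^2 ≤
      dist z (s n)^2/2 + dist z' (s n)^2/2 - dist z z'^2/4 := by
    intro n
    have := hX z z' (s n) m g1 g2
    have c1 : dist (s n) m = dist m (s n) := dist_comm _ _
    have c2 : dist (s n) z = dist z (s n) := dist_comm _ _
    have c3 : dist (s n) z' = dist z' (s n) := dist_comm _ _
    rw [c1, c2, c3] at this
    linarith
  have hsq : psi s m ^2 = limsup (fun n => dist m (s n)^2) atTop :=
    (limsup_sq (fun n => dist_nonneg) (psi_bnd hb m)).symm
  rw [hsq]
  have step1 : limsup (fun n => dist m (s n)^2) atTop ≤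
      limsup (fun n => dist z (s n)^2/2 + dist z' (s n)^2/2 - dist z z'^2/4) atTop := by
    apply limsup_mono' (C := (dist z x0 + C)^2/2 + (dist z' x0 + C)^2/2)
      (Eventually.of_forall hpt) (fun n => sq_nonneg _)
    intro n
    have b1 := psi_bnd hb z n
    have b2 := psi_bnd hb z' n
    have hd1 : (0:ℝ) ≤ dist z (s n) := dist_nonneg
    have hd2 : (0:ℝ) ≤ dist z' (s n) := dist_nonneg
    nlinarith [sq_nonneg (dist z z')]
  have step2 : limsup (fun n => dist z (s n)^2/2 + dist z' (s n)^2/2 - dist z z'^2/4) atTop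
      ≤ psi s z ^2/2 + psi s z' ^2/2 - dist z z'^2/4 := by
    have e1 : (fun n => dist z (s n)^2/2 + dist z' (s n)^2/2 - dist z z'^2/4)
        = fun n => ((1/2)*dist z (s n)^2 + (1/2)*dist z' (s n)^2) + (- (dist z z'^2/4)) := by
      funext n; ring
    rw [e1]
    rw [limsup_add_const _ _
      (fun n => by positivity)
      (fun n => by
        have b1 := psi_bnd hb z n
        have b2 := psi_bnd hb z' n
        have : dist z (s n)^2 ≤ (dist z x0 + C)^2 := by nlinarith [dist_nonneg (x := z) (y := s n)]
        have : dist z' (s n)^2 ≤ (dist z' x0 + C)^2 := by nlinarith [dist_nonneg (x := z') (y := s n)]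
        nlinarith [dist_nonneg (x := z) (y := s n), dist_nonneg (x := z') (y := s n), b1, b2]
        : ∀ n, (1/2)*dist z (s n)^2 + (1/2)*dist z' (s n)^2 ≤
            (1/2)*(dist z x0 + C)^2 + (1/2)*(dist z' x0 + C)^2)]
    have hadd := limsup_add_le'
      (u := fun n => (1/2)*dist z (s n)^2) (v := fun n => (1/2)*dist z' (s n)^2)
      (fun n => by positivity) (fun n => by positivity)
      (C := (1/2)*(dist z x0 + C)^2)
      (fun n => by nlinarith [dist_nonneg (x := z) (y := s n), psi_bnd hb z n])
      (C' := (1/2)*(dist z' x0 + C)^2)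
      (fun n => by nlinarith [dist_nonneg (x := z') (y := s n), psi_bnd hb z' n])
    have hmul1 : limsup (fun n => (1/2)*dist z (s n)^2) atTop = (1/2) * limsup (fun n => dist z (s n)^2) atTop := by
      have hmono : Monotone (fun x : ℝ => (1/2)*x) := fun a b h => by nlinarith
      have := hmono.map_limsup_of_continuousAt (F := atTop) (fun n => dist z (s n)^2)
        ((continuous_const.mul continuous_id).continuousAt)
        (bddu (fun n => by nlinarith [dist_nonneg (x := z) (y := s n), psi_bnd hb z n]
          : ∀ n, dist z (s n)^2 ≤ (dist z x0 + C)^2))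
        (cobddu (fun n => sq_nonneg _))
      exact this.symm
    have hmul2 : limsup (fun n => (1/2)*dist z' (s n)^2) atTop = (1/2) * limsup (fun n => dist z' (s n)^2) atTop := by
      have hmono : Monotone (fun x : ℝ => (1/2)*x) := fun a b h => by nlinarith
      have := hmono.map_limsup_of_continuousAt (F := atTop) (fun n => dist z' (s n)^2)
        ((continuous_const.mul continuous_id).continuousAt)
        (bddu (fun n => by nlinarith [dist_nonneg (x := z') (y := s n), psi_bnd hb z' n]
          : ∀ n, dist z' (s n)^2 ≤ (dist z' x0 + C)^2))
        (cobddu (fun n => sq_nonneg _))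
      exact this.symm
    have hsq1 : limsup (fun n => dist z (s n)^2) atTop = psi s z ^2 :=
      limsup_sq (fun n => dist_nonneg) (psi_bnd hb z)
    have hsq2 : limsup (fun n => dist z' (s n)^2) atTop = psi s z' ^2 :=
      limsup_sq (fun n => dist_nonneg) (psi_bnd hb z')
    rw [hmul1, hmul2, hsq1, hsq2] at hadd
    linarith [hadd]
  linarith [step1, step2]

/-- uniqueness of asymptotic centers -/
lemma center_unique (G : Geodesic X) (hX : CAT0 X) (hb : ∀ n, dist x0 (s n) ≤ C)
    {u v : X} (hu : ∀ y, psi s u ≤ psi s y) (hv : ∀ y, psi s v ≤ psi s y) :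
    u = v := by
  set m := G.geo u v (1/2) with hm
  have hcn := psi_cn G hX hb u v
  have h1 : psi s u ≤ psi s m := hu m
  have h2 : psi s u = psi s v := le_antisymm (hu v) (hv u)
  have h3 : 0 ≤ psi s u := psi_nonneg hb u
  have h4 : psi s u ^2 ≤ psi s m ^2 := by nlinarith [h1, h3]
  have : dist u v ^2 ≤ 0 := by nlinarith [hcn, h4, h2]
  have := sq_eq_zero_iff.1 (le_antisymm this (sq_nonneg _))
  rwa [dist_eq_zero] at this

/-- existence of asymptotic centers -/
lemma center_exists [CompleteSpace X] (G : Geodesic X) (hX : CAT0 X)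
    (hb : ∀ n, dist x0 (s n) ≤ C) :
    ∃ u : X, ∀ y, psi s u ≤ psi s y := by
  haveI : Nonempty X := ⟨s 0⟩
  have hBdd : BddBelow (Set.range (psi s)) := ⟨0, by
    rintro r ⟨z, rfl⟩
    exact psi_nonneg hb z⟩
  set Imin := ⨅ z : X, psi s z with hI
  have hI0 : 0 ≤ Imin := le_ciInf (fun z => psi_nonneg hb z)
  have hIle : ∀ z, Imin ≤ psi s z := fun z => ciInf_le hBdd z
  have hmin : ∀ k : ℕ, ∃ z : X, psi s z < Imin + 1/((k:ℝ)+1) := by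
    intro k
    apply exists_lt_of_ciInf_lt
    rw [← hI]
    have : (0:ℝ) < 1/((k:ℝ)+1) := by positivity
    linarith
  choose z hz using hmin
  -- Cauchy
  have hcauchy : CauchySeq z := by
    apply cauchySeq_of_le_tendsto_0 (fun N : ℕ => Real.sqrt (4*(Imin + 1/((N:ℝ)+1))^2 - 4*Imin^2))
    · intro n m' N hn hm
      have hb0 : (0:ℝ) ≤ 4*(Imin + 1/((N:ℝ)+1))^2 - 4*Imin^2 := by
        have h01 : (0:ℝ) < 1/((N:ℝ)+1) := by positivity
        nlinarith [hI0, h01]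
      have hbig : ∀ j : ℕ, N ≤ j → psi s (z j) < Imin + 1/((N:ℝ)+1) := by
        intro j hj
        calc psi s (z j) < Imin + 1/((j:ℝ)+1) := hz j
          _ ≤ Imin + 1/((N:ℝ)+1) := by
              have h2 : (1:ℝ)/((j:ℝ)+1) ≤ 1/((N:ℝ)+1) := by
                apply one_div_le_one_div_of_le (by positivity)
                have := (Nat.cast_le (α := ℝ)).2 hj
                linarith
              linarith
      have hd2 : dist (z n) (z m') ^2 ≤ 4*(Imin + 1/((N:ℝ)+1))^2 - 4*Imin^2 := by
        have hcn := psi_cn G hX hb (z n) (z m')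
        have hIm : Imin ≤ psi s (G.geo (z n) (z m') (1/2)) := hIle _
        have h1 := hbig n hn
        have h2 := hbig m' hm
        have hp1 : 0 ≤ psi s (z n) := psi_nonneg hb _
        have hp2 : 0 ≤ psi s (z m') := psi_nonneg hb _
        have h01 : (0:ℝ) < 1/((N:ℝ)+1) := by positivity
        nlinarith [hcn, hIm, h1, h2, hI0, hp1, hp2]
      apply dist_le_of_sq_le_sq _ (Real.sqrt_nonneg _)
      rw [Real.sq_sqrt hb0]
      exact hd2
    · have h1 : Tendsto (fun N : ℕ => Imin + 1/((N:ℝ)+1)) atTop (nhds (Imin + 0)) :=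
        tendsto_const_nhds.add tendsto_one_div_add_atTop_nhds_zero_nat
      have h2 : Tendsto (fun N : ℕ => 4*(Imin + 1/((N:ℝ)+1))^2 - 4*Imin^2) atTop
          (nhds (4*(Imin + 0)^2 - 4*Imin^2)) := by
        apply Tendsto.sub _ tendsto_const_nhds
        exact tendsto_const_nhds.mul (h1.pow 2)
      have h3 : 4*(Imin + 0)^2 - 4*Imin^2 = 0 := by ring
      rw [h3] at h2
      have h4 := (Real.continuous_sqrt.tendsto' 0 0 Real.sqrt_zero).comp h2
      exact h4
  obtain ⟨u, hu⟩ := cauchySeq_tendsto_of_complete hcauchy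
  refine ⟨u, fun y => ?_⟩
  have hle : ∀ k : ℕ, psi s u ≤ Imin + 1/((k:ℝ)+1) + dist u (z k) := fun k => by
    calc psi s u ≤ psi s (z k) + dist u (z k) := psi_lip hb u (z k)
      _ ≤ Imin + 1/((k:ℝ)+1) + dist u (z k) := by linarith [hz k]
  have htend : Tendsto (fun k : ℕ => Imin + 1/((k:ℝ)+1) + dist u (z k)) atTop (nhds (Imin + 0 + 0)) := by
    apply Tendsto.add
    · apply Tendsto.add tendsto_const_nhds
      exact tendsto_one_div_add_atTop_nhds_zero_nat
    · rw [show (fun k => dist u (z k)) = fun k => dist (z k) u by funext k; rw [dist_comm]]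
      exact (tendsto_iff_dist_tendsto_zero).1 hu
  have : psi s u ≤ Imin + 0 + 0 := ge_of_tendsto htend (Eventually.of_forall hle)
  calc psi s u ≤ Imin := by linarith
    _ ≤ psi s y := hIle y

end Center
end APBA
end Chunk6

section Chunk7
namespace APBA
open Filter

variable {X : Type*} [MetricSpace X]

/-- Core: Picard iterates of `PA ∘ PB` Δ-converge to a fixed point which is the
asymptotic center of the sequence. -/
lemma core [CompleteSpace X] (G : Geodesic X) (hX : CAT0 X) {A B : Set X}
    (hAconv : ∀ x ∈ A, ∀ y ∈ A, ∀ t ∈ Set.Icc (0:ℝ) 1, G.geo x y t ∈ A)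
    (hBconv : ∀ x ∈ B, ∀ y ∈ B, ∀ t ∈ Set.Icc (0:ℝ) 1, G.geo x y t ∈ B)
    (PA PB : X → X)
    (hPA : ∀ x : X, PA x ∈ A ∧ ∀ z ∈ A, dist x (PA x) ≤ dist x z)
    (hPB : ∀ x : X, PB x ∈ B ∧ ∀ z ∈ B, dist x (PB x) ≤ dist x z)
    {af bf : X} (haf : PA bf = af) (hbf : PB af = bf)
    (s : ℕ → X) (hs : ∀ n, s (n+1) = PA (PB (s n))) :
    ∃ u : X, PA (PB u) = u ∧ (∀ y, psi s u ≤ psi s y) ∧ DeltaConvergesTo s u := by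
  -- nonexpansiveness
  have hPAne : ∀ x y : X, dist (PA x) (PA y) ≤ dist x y := fun x y =>
    proj_nonexpansive G hX hAconv (hPA x).1 (hPA x).2 (hPA y).1 (hPA y).2
  have hPBne : ∀ x y : X, dist (PB x) (PB y) ≤ dist x y := fun x y =>
    proj_nonexpansive G hX hBconv (hPB x).1 (hPB x).2 (hPB y).1 (hPB y).2
  have hPAfirm : ∀ x y : X, dist (PA x) (PA y) ^2 ≤
      dist x y ^2 - (dist x (PA x) - dist y (PA y))^2 := fun x y =>
    firm G hX hAconv (hPA x).1 (hPA x).2 (hPA y).1 (hPA y).2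
  have hPBfirm : ∀ x y : X, dist (PB x) (PB y) ^2 ≤
      dist x y ^2 - (dist x (PB x) - dist y (PB y))^2 := fun x y =>
    firm G hX hBconv (hPB x).1 (hPB x).2 (hPB y).1 (hPB y).2
  have hfix : PA (PB af) = af := by rw [hbf, haf]
  -- Fejér monotonicity for any fixed point
  have hfejer : ∀ v : X, PA (PB v) = v → ∀ n, dist (s (n+1)) v ≤ dist (s n) v := by
    intro v hv n
    calc dist (s (n+1)) v = dist (PA (PB (s n))) (PA (PB v)) := by rw [hs n, hv]
      _ ≤ dist (PB (s n)) (PB v) := hPAne _ _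
      _ ≤ dist (s n) v := hPBne _ _
  have hanti : ∀ v : X, PA (PB v) = v → Antitone (fun n => dist (s n) v) := fun v hv =>
    antitone_nat_of_succ_le (hfejer v hv)
  -- Fejér limits
  have hlim : ∀ v : X, PA (PB v) = v →
      Tendsto (fun n => dist (s n) v) atTop (nhds (⨅ n, dist (s n) v)) := by
    intro v hv
    exact tendsto_atTop_ciInf (hanti v hv) ⟨0, by rintro r ⟨n, rfl⟩; exact dist_nonneg⟩
  -- bound
  set C₀ := dist (s 0) af with hC₀
  have hbnd : ∀ n, dist af (s n) ≤ C₀ := by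
    intro n
    rw [dist_comm]
    exact hanti af hfix (Nat.zero_le n)
  -- the chain s(n+1) –– t n –– with the fixed pair
  have hchain1 : ∀ n, dist (PB (s n)) bf ≤ dist (s n) af := by
    intro n
    calc dist (PB (s n)) bf = dist (PB (s n)) (PB af) := by rw [hbf]
      _ ≤ dist (s n) af := hPBne _ _
  have hchain2 : ∀ n, dist (s (n+1)) af ≤ dist (PB (s n)) bf := by
    intro n
    calc dist (s (n+1)) af = dist (PA (PB (s n))) (PA bf) := by rw [hs n, haf]
      _ ≤ dist (PB (s n)) bf := hPAne _ _
  set ρ := ⨅ n, dist (s n) af with hρ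
  have hρlim : Tendsto (fun n => dist (s n) af) atTop (nhds ρ) := hlim af hfix
  have hρlim' : Tendsto (fun n => dist (s (n+1)) af) atTop (nhds ρ) :=
    (tendsto_add_atTop_iff_nat 1).2 hρlim
  have htb : Tendsto (fun n => dist (PB (s n)) bf) atTop (nhds ρ) :=
    tendsto_of_tendsto_of_tendsto_of_le_of_le hρlim' hρlim hchain2 hchain1
  -- c n := dist (s n) (PB (s n)) → δ := dist af bf
  set δ := dist af bf with hδd
  have hcd : Tendsto (fun n => dist (s n) (PB (s n))) atTop (nhds δ) := by
    have hkey : ∀ n, (dist (s n) (PB (s n)) - δ)^2 ≤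
        dist (s n) af ^2 - dist (PB (s n)) bf ^2 := by
      intro n
      have := hPBfirm (s n) af
      rw [hbf] at this
      linarith
    have h0 : Tendsto (fun n => dist (s n) af ^2 - dist (PB (s n)) bf ^2) atTop (nhds (ρ^2 - ρ^2)) :=
      (hρlim.pow 2).sub (htb.pow 2)
    rw [show ρ^2 - ρ^2 = 0 by ring] at h0
    have hsq : Tendsto (fun n => (dist (s n) (PB (s n)) - δ)^2) atTop (nhds 0) :=
      squeeze_zero (fun n => sq_nonneg _) hkey h0
    have habs : Tendsto (fun n => |dist (s n) (PB (s n)) - δ|) atTop (nhds 0) := by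
      have h4 := (Real.continuous_sqrt.tendsto' 0 0 Real.sqrt_zero).comp hsq
      simp only [Function.comp_def] at h4
      have : (fun n => Real.sqrt ((dist (s n) (PB (s n)) - δ)^2)) =
          fun n => |dist (s n) (PB (s n)) - δ| := by
        funext n; rw [Real.sqrt_sq_eq_abs]
      rwa [this] at h4
    rw [← tendsto_sub_nhds_zero_iff]
    exact (tendsto_zero_iff_abs_tendsto_zero _).2 habs
  -- c' n := dist (PB (s n)) (s (n+1)) → δ
  have hcd' : Tendsto (fun n => dist (PB (s n)) (s (n+1))) atTop (nhds δ) := by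
    have hkey : ∀ n, (dist (PB (s n)) (s (n+1)) - δ)^2 ≤
        dist (PB (s n)) bf ^2 - dist (s (n+1)) af ^2 := by
      intro n
      have h1 := hPAfirm (PB (s n)) bf
      rw [haf, ← hs n] at h1
      have h2 : dist bf af = δ := by rw [dist_comm]
      rw [h2] at h1
      linarith
    have h0 : Tendsto (fun n => dist (PB (s n)) bf ^2 - dist (s (n+1)) af ^2) atTop
        (nhds (ρ^2 - ρ^2)) := (htb.pow 2).sub (hρlim'.pow 2)
    rw [show ρ^2 - ρ^2 = 0 by ring] at h0
    have hsq : Tendsto (fun n => (dist (PB (s n)) (s (n+1)) - δ)^2) atTop (nhds 0) :=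
      squeeze_zero (fun n => sq_nonneg _) hkey h0
    have habs : Tendsto (fun n => |dist (PB (s n)) (s (n+1)) - δ|) atTop (nhds 0) := by
      have h4 := (Real.continuous_sqrt.tendsto' 0 0 Real.sqrt_zero).comp hsq
      simp only [Function.comp_def] at h4
      have : (fun n => Real.sqrt ((dist (PB (s n)) (s (n+1)) - δ)^2)) =
          fun n => |dist (PB (s n)) (s (n+1)) - δ| := by
        funext n; rw [Real.sqrt_sq_eq_abs]
      rwa [this] at h4
    rw [← tendsto_sub_nhds_zero_iff]
    exact (tendsto_zero_iff_abs_tendsto_zero _).2 habs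
  -- asymptotic regularity
  have hreg : Tendsto (fun n => dist (s n) (s (n+1))) atTop (nhds 0) := by
    rw [← tendsto_add_atTop_iff_nat 1]
    have hkey : ∀ n, dist (s (n+1)) (s (n+2)) ^2 ≤
        2*dist (s (n+1)) (PB (s (n+1)))^2 - 2*dist (PB (s (n+1))) (s (n+2))^2 := by
      intro n
      set t := PB (s (n+1)) with ht
      set m := G.geo (s (n+1)) (s (n+2)) (1/2) with hm
      have hmA : m ∈ A := by
        apply hAconv
        · rw [hs n]; exact (hPA _).1
        · rw [hs (n+1)]; exact (hPA _).1
        · constructor <;> norm_num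
      have g1 : dist (s (n+1)) m = dist (s (n+1)) (s (n+2)) / 2 := geo_half_left G _ _
      have g2 : dist (s (n+2)) m = dist (s (n+1)) (s (n+2)) / 2 := geo_half_right G _ _
      have hCN := hX (s (n+1)) (s (n+2)) t m g1 g2
      have hmin : dist t (s (n+2)) ≤ dist t m := by
        have h5 := (hPA t).2 m hmA
        rw [show s (n+2) = PA t by rw [hs (n+1)]]
        exact h5
      have hc1 : dist t (s (n+1))^2 = dist (s (n+1)) t^2 := by rw [dist_comm]
      have hsq : dist t (s (n+2))^2 ≤ dist t m ^2 := by
        nlinarith [dist_nonneg (x := t) (y := s (n+2)), hmin]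
      linarith [hCN, hsq, hc1]
    have h0 : Tendsto (fun n => 2*dist (s (n+1)) (PB (s (n+1)))^2 -
        2*dist (PB (s (n+1))) (s (n+2))^2) atTop (nhds (2*δ^2 - 2*δ^2)) := by
      apply Tendsto.sub
      · exact (tendsto_const_nhds).mul ((((tendsto_add_atTop_iff_nat 1).2 hcd)).pow 2)
      · exact (tendsto_const_nhds).mul ((((tendsto_add_atTop_iff_nat 1).2 hcd')).pow 2)
    rw [show 2*δ^2 - 2*δ^2 = 0 by ring] at h0
    have hsq2 : Tendsto (fun n => dist (s (n+1)) (s (n+2)) ^2) atTop (nhds 0) :=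
      squeeze_zero (fun n => sq_nonneg _) hkey h0
    have habs := (Real.continuous_sqrt.tendsto' 0 0 Real.sqrt_zero).comp hsq2
    simp only [Function.comp_def] at habs
    have heq : (fun n => Real.sqrt (dist (s (n+1)) (s (n+2))^2)) =
        fun n => dist (s (n+1)) (s (n+2)) := by
      funext n; rw [Real.sqrt_sq dist_nonneg]
    rwa [heq] at habs
  -- any asymptotic center of a subsequence is a fixed point
  have hsubfix : ∀ (φ : ℕ → ℕ), StrictMono φ → ∀ v : X,
      (∀ y, psi (s ∘ φ) v ≤ psi (s ∘ φ) y) → PA (PB v) = v := by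
    intro φ hφ v hv
    have hbφ : ∀ n, dist af ((s ∘ φ) n) ≤ C₀ := fun n => hbnd (φ n)
    have hTv : ∀ n, dist (PA (PB v)) ((s ∘ φ) n) ≤
        dist v ((s ∘ φ) n) + dist (s (φ n)) (s (φ n + 1)) := by
      intro n
      have h1 : dist (PA (PB v)) (s (φ n + 1)) ≤ dist v (s (φ n)) := by
        calc dist (PA (PB v)) (s (φ n + 1)) = dist (PA (PB v)) (PA (PB (s (φ n)))) := by
              rw [hs (φ n)]
          _ ≤ dist (PB v) (PB (s (φ n))) := hPAne _ _
          _ ≤ dist v (s (φ n)) := hPBne _ _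
      calc dist (PA (PB v)) ((s ∘ φ) n) ≤
            dist (PA (PB v)) (s (φ n + 1)) + dist (s (φ n + 1)) (s (φ n)) :=
            dist_triangle _ _ _
        _ ≤ dist v ((s ∘ φ) n) + dist (s (φ n)) (s (φ n + 1)) := by
            rw [dist_comm (s (φ n + 1)) (s (φ n))]
            exact add_le_add h1 (le_refl _)
    have hψTv : psi (s ∘ φ) (PA (PB v)) ≤ psi (s ∘ φ) v := by
      have hvb : ∀ n, dist v ((s ∘ φ) n) ≤ dist v af + C₀ := fun n => by
        calc dist v ((s ∘ φ) n) ≤ dist v af + dist af ((s ∘ φ) n) := dist_triangle _ _ _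
          _ ≤ dist v af + C₀ := by linarith [hbφ n]
      calc psi (s ∘ φ) (PA (PB v)) ≤
            limsup (fun n => dist v ((s ∘ φ) n) + dist (s (φ n)) (s (φ n + 1))) atTop := by
            apply limsup_mono' (C := dist v af + C₀ + C₀ + C₀)
              (Eventually.of_forall hTv) (fun n => dist_nonneg)
            intro n
            have h8 : dist (s (φ n)) (s (φ n + 1)) ≤ dist (s (φ n)) af + dist af (s (φ n + 1)) :=
              dist_triangle _ _ _
            have h9 : dist (s (φ n)) af ≤ C₀ := by rw [dist_comm]; exact hbnd _
            have h10 : dist af (s (φ n + 1)) ≤ C₀ := hbnd _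
            have := hvb n
            linarith
        _ ≤ psi (s ∘ φ) v := by
            apply limsup_add_le_of_tendsto_zero (fun n => dist_nonneg) hvb
            · exact hreg.comp hφ.tendsto_atTop
            · exact fun n => dist_nonneg
    exact center_unique (x0 := af) G hX hbφ
      (fun y => le_trans hψTv (hv y)) hv
  -- the center of the full sequence
  obtain ⟨u, hu⟩ := center_exists (x0 := af) G hX hbnd
  have hufix : PA (PB u) = u := hsubfix id strictMono_id u (by simpa [Function.comp] using hu)
  -- limits
  have hLu := hlim u hufix
  set Lu := ⨅ n, dist (s n) u with hLud
  -- any center of any subsequence equals u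
  have hkeyuniq : ∀ (φ : ℕ → ℕ), StrictMono φ → ∀ v : X,
      (∀ y, psi (s ∘ φ) v ≤ psi (s ∘ φ) y) → v = u := by
    intro φ hφ v hv
    have hbφ : ∀ n, dist af ((s ∘ φ) n) ≤ C₀ := fun n => hbnd (φ n)
    have hvfix : PA (PB v) = v := hsubfix φ hφ v hv
    have hLv := hlim v hvfix
    set Lv := ⨅ n, dist (s n) v with hLvd
    -- psi values along the subsequence
    have hψv : psi (s ∘ φ) v = Lv := by
      apply limsup_of_tendsto
      have h1 : Tendsto (fun n => dist v (s n)) atTop (nhds Lv) := by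
        have : (fun n => dist v (s n)) = fun n => dist (s n) v := by
          funext n; rw [dist_comm]
        rw [this]; exact hLv
      exact h1.comp hφ.tendsto_atTop
    have hψu : psi (s ∘ φ) u = Lu := by
      apply limsup_of_tendsto
      have h1 : Tendsto (fun n => dist u (s n)) atTop (nhds Lu) := by
        have : (fun n => dist u (s n)) = fun n => dist (s n) u := by
          funext n; rw [dist_comm]
        rw [this]; exact hLu
      exact h1.comp hφ.tendsto_atTop
    -- psi values along the full sequence
    have hψfv : psi s v = Lv := by
      apply limsup_of_tendsto
      have : (fun n => dist v (s n)) = fun n => dist (s n) v := by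
        funext n; rw [dist_comm]
      rw [this]; exact hLv
    have hψfu : psi s u = Lu := by
      apply limsup_of_tendsto
      have : (fun n => dist u (s n)) = fun n => dist (s n) u := by
        funext n; rw [dist_comm]
      rw [this]; exact hLu
    have hLvLu : Lv ≤ Lu := by
      have := hv u
      rwa [hψv, hψu] at this
    have hLuLv : Lu ≤ Lv := by
      have := hu v
      rwa [hψfv, hψfu] at this
    have hLeq : Lu = Lv := le_antisymm hLuLv hLvLu
    -- midpoint argument on the full sequence
    have hcn := psi_cn (x0 := af) G hX hbnd u v
    rw [hψfu, hψfv, ← hLeq] at hcn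
    have hum : psi s u ≤ psi s (G.geo u v (1/2)) := hu _
    rw [hψfu] at hum
    have hLu0 : 0 ≤ Lu := by
      have := psi_nonneg (x0 := af) hbnd u
      rwa [hψfu] at this
    have hLum : Lu^2 ≤ psi s (G.geo u v (1/2))^2 := by nlinarith
    have : dist u v ^2 ≤ 0 := by nlinarith [hcn, hLum]
    have h0 := sq_eq_zero_iff.1 (le_antisymm this (sq_nonneg _))
    rw [dist_eq_zero] at h0
    rw [h0]
  refine ⟨u, hufix, hu, ?_⟩
  intro φ hφ
  constructor
  · -- u is an asymptotic center of s ∘ φ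
    obtain ⟨v, hv⟩ := center_exists (x0 := af) G hX (fun n => hbnd (φ n) : ∀ n, dist af ((s ∘ φ) n) ≤ C₀)
    have := hkeyuniq φ hφ v hv
    rw [← this]
    exact hv
  · intro v hv
    exact hkeyuniq φ hφ v hv

end APBA
end Chunk7

section Chunk8
namespace APBA
open Filter Metric

variable {X : Type*} [MetricSpace X]

lemma local_ball_compact {A : Set X} (hcl : IsClosed A) (hloc : LocallyCompactSpace A)
    {z : X} (hz : z ∈ A) : ∃ ε > 0, IsCompact (closedBall z ε ∩ A) := by
  obtain ⟨K, hKc, hKn⟩ := exists_compact_mem_nhds (⟨z, hz⟩ : A)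
  obtain ⟨ε, hε, hball⟩ := Metric.mem_nhds_iff.1 hKn
  refine ⟨ε/2, by positivity, ?_⟩
  have himg : IsCompact (Subtype.val '' K) := hKc.image continuous_subtype_val
  apply himg.of_isClosed_subset (IsClosed.inter Metric.isClosed_closedBall hcl)
  rintro w ⟨hw1, hw2⟩
  refine ⟨⟨w, hw2⟩, hball ?_, rfl⟩
  rw [Metric.mem_ball, Subtype.dist_eq]
  have := Metric.mem_closedBall.1 hw1
  calc dist (w : X) z ≤ ε/2 := this
    _ < ε := by linarith

lemma ball_compact [CompleteSpace X] (G : Geodesic X) {A : Set X}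
    (hconv : ∀ x ∈ A, ∀ y ∈ A, ∀ t ∈ Set.Icc (0:ℝ) 1, G.geo x y t ∈ A)
    (hcl : IsClosed A) (hloc : LocallyCompactSpace A)
    {p : X} (hp : p ∈ A) (r : ℝ) : IsCompact (closedBall p r ∩ A) := by
  rcases lt_or_ge r 0 with hr | hr
  · rw [Metric.closedBall_eq_empty.2 hr]
    simp
  -- contraction tool
  have hcontr : ∀ ρ ρ' : ℝ, 0 ≤ ρ' → ρ' ≤ ρ → ∀ w ∈ closedBall p ρ ∩ A,
      ∃ w' ∈ closedBall p ρ' ∩ A, dist w w' ≤ ρ - ρ' := by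
    intro ρ ρ' hρ'0 hρ'ρ w hw
    rcases le_or_gt (dist p w) ρ' with hcase | hcase
    · exact ⟨w, ⟨by rwa [Metric.mem_closedBall, dist_comm], hw.2⟩, by
        rw [dist_self]; linarith⟩
    · have hd0 : 0 < dist p w := lt_of_le_of_lt hρ'0 hcase
      have hdρ : dist p w ≤ ρ := by
        have := Metric.mem_closedBall.1 hw.1
        rwa [dist_comm] at this
      set τ := ρ'/(dist p w) with hτ
      have hτI : τ ∈ Set.Icc (0:ℝ) 1 := ⟨by positivity, by
        rw [div_le_one hd0]; exact hcase.le⟩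
      refine ⟨G.geo p w τ, ⟨?_, hconv p hp w hw.2 τ hτI⟩, ?_⟩
      · rw [Metric.mem_closedBall, dist_comm, geo_dist_left G p w hτI, hτ]
        rw [div_mul_cancel₀ _ (ne_of_gt hd0)]
      · rw [dist_comm, geo_dist_right G p w hτI, hτ]
        have : (1 - ρ'/dist p w) * dist p w = dist p w - ρ' := by
          field_simp
        rw [this]
        linarith
  -- the set of good radii
  set S := {t : ℝ | 0 ≤ t ∧ IsCompact (closedBall p t ∩ A)} with hS
  have h0S : (0:ℝ) ∈ S := by
    refine ⟨le_refl 0, ?_⟩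
    apply Set.Finite.isCompact
    apply Set.Finite.subset (Set.finite_singleton p)
    intro w hw
    have := Metric.mem_closedBall.1 hw.1
    simp only [Set.mem_singleton_iff]
    have : dist w p = 0 := le_antisymm this dist_nonneg
    rwa [dist_eq_zero] at this
  have hSdown : ∀ t ∈ S, ∀ t' : ℝ, 0 ≤ t' → t' ≤ t → t' ∈ S := by
    intro t ht t' ht'0 ht't
    refine ⟨ht'0, ?_⟩
    apply ht.2.of_isClosed_subset (IsClosed.inter Metric.isClosed_closedBall hcl)
    exact Set.inter_subset_inter_left A (Metric.closedBall_subset_closedBall ht't)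
  set T := S ∩ Set.Icc 0 r with hT
  have hTne : (0:ℝ) ∈ T := ⟨h0S, le_refl 0, hr⟩
  have hTbdd : BddAbove T := ⟨r, fun t ht => ht.2.2⟩
  set R := sSup T with hR
  have hR0 : 0 ≤ R := le_csSup hTbdd hTne
  have hRr : R ≤ r := csSup_le ⟨0, hTne⟩ (fun t ht => ht.2.2)
  have hlow : ∀ t : ℝ, 0 ≤ t → t < R → t ∈ S := by
    intro t ht0 htR
    obtain ⟨t', ht'T, htt'⟩ := exists_lt_of_lt_csSup ⟨0, hTne⟩ htR
    exact hSdown t' ht'T.1 t ht0 htt'.le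
  -- R is a good radius
  have hRS : R ∈ S := by
    refine ⟨hR0, ?_⟩
    apply TotallyBounded.isCompact_of_isClosed _ (IsClosed.inter Metric.isClosed_closedBall hcl)
    rw [Metric.totallyBounded_iff]
    intro ε hε
    -- find a good radius close to R
    have hr₁ : max 0 (R - ε/3) ∈ S := by
      rcases eq_or_lt_of_le hR0 with h0 | h0
      · rw [← h0, show max (0:ℝ) (0 - ε/3) = 0 from max_eq_left (by linarith)]
        exact h0S
      · apply hlow _ (le_max_left _ _)
        rw [max_lt_iff]
        constructor
        · exact h0
        · linarith
    have hcomp := hr₁.2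
    have htb := hcomp.totallyBounded
    rw [Metric.totallyBounded_iff] at htb
    obtain ⟨t, htfin, htcov⟩ := htb (ε/3) (by linarith)
    refine ⟨t, htfin, ?_⟩
    intro w hw
    obtain ⟨w', hw', hww'⟩ := hcontr R (max 0 (R - ε/3)) (le_max_left _ _)
      (by rw [max_le_iff]; exact ⟨hR0, by linarith⟩) w hw
    have := htcov hw'
    rw [Set.mem_iUnion₂] at this
    obtain ⟨y, hy, hwy⟩ := this
    rw [Set.mem_iUnion₂]
    refine ⟨y, hy, ?_⟩
    rw [Metric.mem_ball] at hwy ⊢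
    have h9 : R - max 0 (R - ε/3) ≤ ε/3 := by
      rcases le_total 0 (R - ε/3) with h' | h'
      · rw [max_eq_right h']; linarith
      · rw [max_eq_left h']; linarith
    calc dist w y ≤ dist w w' + dist w' y := dist_triangle _ _ _
      _ < ε := by linarith [hwy, le_trans hww' h9]
  -- R must equal r
  rcases eq_or_lt_of_le hRr with hfin | hfin
  · rw [← hfin]
    exact hRS.2
  · exfalso
    -- extension beyond R
    have hlocal : ∀ z : X, ∃ ε : ℝ, 0 < ε ∧ (z ∈ A → IsCompact (closedBall z ε ∩ A)) := by
      intro z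
      by_cases hz : z ∈ A
      · obtain ⟨ε, hε, hc⟩ := local_ball_compact hcl hloc hz
        exact ⟨ε, hε, fun _ => hc⟩
      · exact ⟨1, one_pos, fun h => absurd h hz⟩
    choose εf hεf hcf using hlocal
    obtain ⟨t, htK, hcov⟩ := hRS.2.elim_nhds_subcover (fun z => ball z (εf z / 2))
      (fun x _ => ball_mem_nhds x (by have := hεf x; positivity))
    have hpK : p ∈ closedBall p R ∩ A := ⟨by rw [Metric.mem_closedBall, dist_self]; exact hR0, hp⟩
    have htne : t.Nonempty := by
      by_contra h
      rw [Finset.not_nonempty_iff_eq_empty] at h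
      have := hcov hpK
      rw [h] at this
      simpa using this
    set η := t.inf' htne (fun z => εf z / 2) with hη
    have hη0 : 0 < η := by
      rw [hη, Finset.lt_inf'_iff]
      intro z hz
      have := hεf z
      positivity
    set R' := min r (R + η) with hR'
    have hRR' : R ≤ R' := le_min hRr (by linarith)
    have hR'S : R' ∈ S := by
      refine ⟨by linarith, ?_⟩
      have hKbig : IsCompact (⋃ z ∈ t, closedBall z (εf z) ∩ A) := by
        apply t.finite_toSet.isCompact_biUnion
        intro z hz
        exact hcf z ((htK z hz).2)
      apply hKbig.of_isClosed_subset (IsClosed.inter Metric.isClosed_closedBall hcl)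
      intro w hw
      obtain ⟨w', hw', hww'⟩ := hcontr R' R hR0 hRR' w hw
      have := hcov hw'
      rw [Set.mem_iUnion₂] at this
      obtain ⟨z, hzt, hwz⟩ := this
      rw [Set.mem_iUnion₂]
      refine ⟨z, hzt, ?_, hw.2⟩
      rw [Metric.mem_ball] at hwz
      rw [Metric.mem_closedBall]
      have hηz : η ≤ εf z / 2 := Finset.inf'_le _ hzt
      have hR'R : R' - R ≤ η := by
        rw [hR']
        have : min r (R + η) ≤ R + η := min_le_right _ _
        linarith
      calc dist w z ≤ dist w w' + dist w' z := dist_triangle _ _ _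
        _ ≤ η + εf z / 2 := add_le_add (le_trans hww' hR'R) hwz.le
        _ ≤ εf z := by linarith
    have hR'T : R' ∈ T := ⟨hR'S, by constructor <;> [linarith; exact min_le_left _ _]⟩
    have : R' ≤ R := le_csSup hTbdd hR'T
    have hRltR' : R < R' := by
      rw [hR']
      apply lt_min hfin
      linarith
    linarith

end APBA
end Chunk8

section Chunk9
namespace APBA
open Filter Metric

variable {X : Type*} [MetricSpace X]

lemma proj_unique (G : Geodesic X) (hX : CAT0 X) {B : Set X}
    (hconv : ∀ x ∈ B, ∀ y ∈ B, ∀ t ∈ Set.Icc (0:ℝ) 1, G.geo x y t ∈ B)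
    {x b1 b2 : X} (hb1 : b1 ∈ B) (h1 : ∀ z ∈ B, dist x b1 ≤ dist x z)
    (hb2 : b2 ∈ B) (h2 : ∀ z ∈ B, dist x b2 ≤ dist x z) : b1 = b2 := by
  set m := G.geo b1 b2 (1/2) with hm
  have hmB : m ∈ B := hconv b1 hb1 b2 hb2 (1/2) (by constructor <;> norm_num)
  have g1 : dist b1 m = dist b1 b2 / 2 := geo_half_left G _ _
  have g2 : dist b2 m = dist b1 b2 / 2 := geo_half_right G _ _
  have hCN := hX b1 b2 x m g1 g2
  have he : dist x b1 = dist x b2 := le_antisymm (h1 b2 hb2) (h2 b1 hb1)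
  have hm1 : dist x b1 ≤ dist x m := h1 m hmB
  have hsq : dist x b1 ^2 ≤ dist x m ^2 := by nlinarith [dist_nonneg (x := x) (y := b1)]
  have he2 : dist x b1 ^2 = dist x b2 ^2 := by rw [he]
  have : dist b1 b2 ^2 ≤ 0 := by linarith [hCN, hsq, he2]
  have h0 := sq_eq_zero_iff.1 (le_antisymm this (sq_nonneg _))
  rwa [dist_eq_zero] at h0

end APBA
end Chunk9

open APBA in
/-- Δ-convergence of the alternating projection method to a best approximation pair of two
nonempty closed convex sets `A`, `B` (for which a best approximation pair exists) in a
complete CAT(0) space, with strong convergence when `A` or `B` is locally compact. -/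
theorem alternating_projections_best_approximation {X : Type*} [MetricSpace X]
    [CompleteSpace X] (G : Geodesic X) (hX : CAT0 X)
    (A B : Set X) (hAne : A.Nonempty) (hBne : B.Nonempty)
    (hAcl : IsClosed A) (hBcl : IsClosed B)
    (hAconv : ∀ x ∈ A, ∀ y ∈ A, ∀ t ∈ Set.Icc (0:ℝ) 1, G.geo x y t ∈ A)
    (hBconv : ∀ x ∈ B, ∀ y ∈ B, ∀ t ∈ Set.Icc (0:ℝ) 1, G.geo x y t ∈ B)
    (hS : ∃ a ∈ A, ∃ b ∈ B, ∀ a' ∈ A, ∀ b' ∈ B, dist a b ≤ dist a' b')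
    (PA PB : X → X)
    (hPA : ∀ x : X, PA x ∈ A ∧ ∀ z ∈ A, dist x (PA x) ≤ dist x z)
    (hPB : ∀ x : X, PB x ∈ B ∧ ∀ z ∈ B, dist x (PB x) ≤ dist x z)
    (x₀ : X) (x y : ℕ → X) (hx0 : x 0 = x₀)
    (hy : ∀ n : ℕ, y n = PB (x n))
    (hx : ∀ n : ℕ, x (n + 1) = PA (y n)) :
    ∃ a ∈ A, ∃ b ∈ B, (∀ a' ∈ A, ∀ b' ∈ B, dist a b ≤ dist a' b') ∧
      DeltaConvergesTo x a ∧ DeltaConvergesTo y b ∧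
      ((LocallyCompactSpace A ∨ LocallyCompactSpace B) →
        Filter.Tendsto x Filter.atTop (nhds a) ∧
        Filter.Tendsto y Filter.atTop (nhds b)) := by
  obtain ⟨a0, ha0, b0, hb0, hmin⟩ := hS
  -- nonexpansiveness
  have hPAne : ∀ x' y' : X, dist (PA x') (PA y') ≤ dist x' y' := fun x' y' =>
    proj_nonexpansive G hX hAconv (hPA x').1 (hPA x').2 (hPA y').1 (hPA y').2
  have hPBne : ∀ x' y' : X, dist (PB x') (PB y') ≤ dist x' y' := fun x' y' =>
    proj_nonexpansive G hX hBconv (hPB x').1 (hPB x').2 (hPB y').1 (hPB y').2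
  have hPBfirm : ∀ x' y' : X, dist (PB x') (PB y') ^2 ≤
      dist x' y' ^2 - (dist x' (PB x') - dist y' (PB y'))^2 := fun x' y' =>
    firm G hX hBconv (hPB x').1 (hPB x').2 (hPB y').1 (hPB y').2
  -- canonical fixed pair
  set bf := PB a0 with hbfd
  set af := PA bf with hafd
  have hbfB : bf ∈ B := (hPB a0).1
  have hafA : af ∈ A := (hPA bf).1
  have h1 : dist a0 bf = dist a0 b0 :=
    le_antisymm ((hPB a0).2 b0 hb0) (hmin a0 ha0 bf hbfB)
  have h2 : dist af bf = dist a0 b0 := by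
    apply le_antisymm
    · calc dist af bf = dist bf (PA bf) := dist_comm _ _
        _ ≤ dist bf a0 := (hPA bf).2 a0 ha0
        _ = dist a0 bf := dist_comm _ _
        _ = dist a0 b0 := h1
    · exact hmin af hafA bf hbfB
  have hbfaf : PB af = bf := by
    apply proj_unique G hX hBconv (hPB af).1 (hPB af).2 hbfB
    intro z hz
    calc dist af bf = dist a0 b0 := h2
      _ ≤ dist af z := hmin af hafA z hz
  have hafbf : PA bf = af := rfl
  -- Picard structure
  have hsx : ∀ n, x (n+1) = PA (PB (x n)) := fun n => by rw [hx n, hy n]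
  have hsy : ∀ n, y (n+1) = PB (PA (y n)) := fun n => by rw [hy (n+1), hx n]
  -- the two cores
  obtain ⟨u, hufix, hucen, hudelta⟩ :=
    core G hX hAconv hBconv PA PB hPA hPB hafbf hbfaf x hsx
  obtain ⟨w, hwfix, hwcen, hwdelta⟩ :=
    core G hX hBconv hAconv PB PA hPB hPA hbfaf hafbf y hsy
  set b := PB u with hbd
  have huA : u ∈ A := by rw [← hufix]; exact (hPA _).1
  have hbB : b ∈ B := (hPB u).1
  have hufixA : PA b = u := hufix
  -- Fejér machinery for x
  have hfejx : ∀ v : X, PA (PB v) = v → ∀ n, dist (x (n+1)) v ≤ dist (x n) v := by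
    intro v hv n
    calc dist (x (n+1)) v = dist (PA (PB (x n))) (PA (PB v)) := by rw [hsx n, hv]
      _ ≤ dist (PB (x n)) (PB v) := hPAne _ _
      _ ≤ dist (x n) v := hPBne _ _
  have hlimx : ∀ v : X, PA (PB v) = v →
      Tendsto (fun n => dist (x n) v) atTop (nhds (⨅ n, dist (x n) v)) := fun v hv =>
    tendsto_atTop_ciInf (antitone_nat_of_succ_le (hfejx v hv))
      ⟨0, by rintro r ⟨n, rfl⟩; exact dist_nonneg⟩
  have hfejy : ∀ v : X, PB (PA v) = v → ∀ n, dist (y (n+1)) v ≤ dist (y n) v := by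
    intro v hv n
    calc dist (y (n+1)) v = dist (PB (PA (y n))) (PB (PA v)) := by rw [hsy n, hv]
      _ ≤ dist (PA (y n)) (PA v) := hPBne _ _
      _ ≤ dist (y n) v := hPAne _ _
  have hlimy : ∀ v : X, PB (PA v) = v →
      Tendsto (fun n => dist (y n) v) atTop (nhds (⨅ n, dist (y n) v)) := fun v hv =>
    tendsto_atTop_ciInf (antitone_nat_of_succ_le (hfejy v hv))
      ⟨0, by rintro r ⟨n, rfl⟩; exact dist_nonneg⟩
  -- chains between the sequences
  have hchain1 : ∀ n, dist (y n) b ≤ dist (x n) u := by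
    intro n
    calc dist (y n) b = dist (PB (x n)) (PB u) := by rw [hy n, hbd]
      _ ≤ dist (x n) u := hPBne _ _
  have hchain2 : ∀ n, dist (x (n+1)) u ≤ dist (y n) b := by
    intro n
    calc dist (x (n+1)) u = dist (PA (y n)) (PA b) := by rw [hx n, hufixA]
      _ ≤ dist (y n) b := hPAne _ _
  set Lu := ⨅ n, dist (x n) u with hLud
  have hLux : Tendsto (fun n => dist (x n) u) atTop (nhds Lu) := hlimx u hufix
  have hLuyb : Tendsto (fun n => dist (y n) b) atTop (nhds Lu) :=
    tendsto_of_tendsto_of_tendsto_of_le_of_le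
      ((tendsto_add_atTop_iff_nat 1).2 hLux) hLux hchain2 hchain1
  -- the second fixed pair coming from w
  set astar := PA w with hastard
  have hwPB : PB astar = w := by rw [hastard, hwfix]
  have hastarfix : PA (PB astar) = astar := by rw [hwPB]
  have hchain3 : ∀ n, dist (y n) w ≤ dist (x n) astar := by
    intro n
    calc dist (y n) w = dist (PB (x n)) (PB astar) := by rw [hy n, hwPB]
      _ ≤ dist (x n) astar := hPBne _ _
  have hchain4 : ∀ n, dist (x (n+1)) astar ≤ dist (y n) w := by
    intro n
    calc dist (x (n+1)) astar = dist (PA (y n)) (PA w) := by rw [hx n, hastard]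
      _ ≤ dist (y n) w := hPAne _ _
  set Last := ⨅ n, dist (x n) astar with hLastd
  have hLastx : Tendsto (fun n => dist (x n) astar) atTop (nhds Last) := hlimx astar hastarfix
  have hLastyw : Tendsto (fun n => dist (y n) w) atTop (nhds Last) :=
    tendsto_of_tendsto_of_tendsto_of_le_of_le
      ((tendsto_add_atTop_iff_nat 1).2 hLastx) hLastx hchain4 hchain3
  -- psi identifications
  have hpsixu : psi x u = Lu := limsup_of_tendsto (by
    have : (fun n => dist u (x n)) = fun n => dist (x n) u := by
      funext n; rw [dist_comm]
    rw [this]; exact hLux)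
  have hpsixast : psi x astar = Last := limsup_of_tendsto (by
    have : (fun n => dist astar (x n)) = fun n => dist (x n) astar := by
      funext n; rw [dist_comm]
    rw [this]; exact hLastx)
  have hpsiyb : psi y b = Lu := limsup_of_tendsto (by
    have : (fun n => dist b (y n)) = fun n => dist (y n) b := by
      funext n; rw [dist_comm]
    rw [this]; exact hLuyb)
  have hpsiyw : psi y w = Last := limsup_of_tendsto (by
    have : (fun n => dist w (y n)) = fun n => dist (y n) w := by
      funext n; rw [dist_comm]
    rw [this]; exact hLastyw)
  -- Lu = Last and b is a center of y
  have hLuLast : Lu ≤ Last := by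
    have := hucen astar
    rwa [hpsixu, hpsixast] at this
  have hLastLu : Last ≤ Lu := by
    have := hwcen b
    rwa [hpsiyw, hpsiyb] at this
  have hbw : b = w := by
    have hbcen : ∀ y', psi y b ≤ psi y y' := by
      intro y'
      rw [hpsiyb]
      calc Lu ≤ Last := hLuLast
        _ = psi y w := hpsiyw.symm
        _ ≤ psi y y' := hwcen y'
    have := (hwdelta id strictMono_id).2 b (by
      intro y'
      have h := hbcen y'
      simpa [Function.comp, psi] using h)
    exact this
  have hydelta : DeltaConvergesTo y b := by rw [hbw]; exact hwdelta
  -- best pair property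
  have hub_eq : dist u af = dist b bf := by
    apply le_antisymm
    · calc dist u af = dist (PA b) (PA bf) := by rw [hufixA, hafbf]
        _ ≤ dist b bf := hPAne _ _
    · calc dist b bf = dist (PB u) (PB af) := by rw [hbd, hbfaf]
        _ ≤ dist u af := hPBne _ _
  have hdub : dist u b = dist a0 b0 := by
    have hf := hPBfirm u af
    rw [hbfaf, ← hbd] at hf
    have h3 : dist af bf = dist a0 b0 := h2
    have hub2 : dist u af ^2 = dist b bf ^2 := by rw [hub_eq]
    have : (dist u b - dist af bf)^2 ≤ 0 := by linarith [hf, hub2]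
    have h4 : dist u b - dist af bf = 0 := by
      have := le_antisymm this (sq_nonneg _)
      exact pow_eq_zero_iff (n := 2) (by norm_num) |>.1 this
    linarith [h4, h3.symm.le, h3.le]
  have hbest : ∀ a' ∈ A, ∀ b' ∈ B, dist u b ≤ dist a' b' := by
    intro a' ha' b' hb'
    rw [hdub]
    exact hmin a' ha' b' hb'
  refine ⟨u, huA, b, hbB, hbest, hudelta, hydelta, ?_⟩
  -- strong convergence
  intro hloc
  have hbndx : ∀ n, dist (x n) u ≤ dist (x 0) u := fun n =>
    (antitone_nat_of_succ_le (f := fun n => dist (x n) u) (hfejx u hufix)) (Nat.zero_le n)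
  have hfyfix : PB (PA b) = b := by rw [hufixA, hbd]
  have hbndy : ∀ n, dist (y n) b ≤ dist (y 0) b := fun n =>
    (antitone_nat_of_succ_le (f := fun n => dist (y n) b) (hfejy b hfyfix)) (Nat.zero_le n)
  have hxdist0 : Tendsto (fun n => dist (x n) u) atTop (nhds 0) →
      Tendsto x atTop (nhds u) ∧ Tendsto y atTop (nhds b) := by
    intro h
    constructor
    · exact tendsto_iff_dist_tendsto_zero.2 h
    · apply tendsto_iff_dist_tendsto_zero.2
      exact squeeze_zero (fun n => dist_nonneg) hchain1 h
  rcases hloc with hlocA | hlocB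
  · -- A locally compact
    have hK := ball_compact G hAconv hAcl hlocA huA (dist (x 0) u)
    have hmem : ∀ n, x (n+1) ∈ closedBall u (dist (x 0) u) ∩ A := by
      intro n
      constructor
      · rw [Metric.mem_closedBall]; exact hbndx (n+1)
      · rw [hsx n]; exact (hPA _).1
    obtain ⟨z, hzK, φ, hφ, hzconv⟩ := hK.tendsto_subseq hmem
    have hφ' : StrictMono (fun n => φ n + 1) := fun a b' h =>
      Nat.succ_lt_succ (hφ h)
    have hzcen : IsAsymptoticCenter (x ∘ fun n => φ n + 1) z := by
      intro y'
      have h0 : Tendsto (fun n => dist z (x (φ n + 1))) atTop (nhds 0) := by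
        have := tendsto_iff_dist_tendsto_zero.1 hzconv
        have heq : (fun n => dist z (x (φ n + 1))) = fun n => dist ((fun k => x (k+1)) (φ n)) z := by
          funext n; rw [dist_comm]
        rw [heq]
        exact this
      have hl0 : limsup (fun n => dist z ((x ∘ fun n => φ n + 1) n)) atTop = 0 :=
        limsup_of_tendsto h0
      rw [hl0]
      apply limsup_nonneg' (fun n => dist_nonneg)
        (C := dist y' u + dist (x 0) u)
      intro n
      calc dist y' ((x ∘ fun n => φ n + 1) n) ≤ dist y' u + dist u (x (φ n + 1)) :=
            dist_triangle _ _ _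
        _ ≤ dist y' u + dist (x 0) u := by
            rw [dist_comm u]
            linarith [hbndx (φ n + 1)]
    have hzu : z = u := (hudelta (fun n => φ n + 1) hφ').2 z hzcen
    -- monotone + subsequence → 0
    have hf0 : Tendsto (fun n => dist (x n) u) atTop (nhds 0) := by
      have hsub : Tendsto (fun n => dist (x (φ n + 1)) u) atTop (nhds 0) := by
        have := tendsto_iff_dist_tendsto_zero.1 hzconv
        rw [hzu] at this
        exact this
      have hcomp : Tendsto ((fun n => dist (x n) u) ∘ fun n => φ n + 1) atTop (nhds Lu) :=
        hLux.comp hφ'.tendsto_atTop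
      have : Lu = 0 := tendsto_nhds_unique hcomp hsub
      rw [← this]
      exact hLux
    exact hxdist0 hf0
  · -- B locally compact
    have hK := ball_compact G hBconv hBcl hlocB hbB (dist (y 0) b)
    have hmem : ∀ n, y n ∈ closedBall b (dist (y 0) b) ∩ B := by
      intro n
      constructor
      · rw [Metric.mem_closedBall]; exact hbndy n
      · rw [hy n]; exact (hPB _).1
    obtain ⟨z, hzK, φ, hφ, hzconv⟩ := hK.tendsto_subseq hmem
    have hzcen : IsAsymptoticCenter (y ∘ φ) z := by
      intro y'
      have h0 : Tendsto (fun n => dist z (y (φ n))) atTop (nhds 0) := by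
        have := tendsto_iff_dist_tendsto_zero.1 hzconv
        have heq : (fun n => dist z (y (φ n))) = fun n => dist ((y ∘ φ) n) z := by
          funext n; rw [dist_comm]; rfl
        rw [heq]
        exact this
      have hl0 : limsup (fun n => dist z ((y ∘ φ) n)) atTop = 0 := limsup_of_tendsto h0
      rw [hl0]
      apply limsup_nonneg' (fun n => dist_nonneg) (C := dist y' b + dist (y 0) b)
      intro n
      calc dist y' ((y ∘ φ) n) ≤ dist y' b + dist b (y (φ n)) := dist_triangle _ _ _
        _ ≤ dist y' b + dist (y 0) b := by
            rw [dist_comm b]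
            linarith [hbndy (φ n)]
    have hzb : z = b := (hydelta φ hφ).2 z hzcen
    have hfy0 : Tendsto (fun n => dist (y n) b) atTop (nhds 0) := by
      have hsub : Tendsto (fun n => dist (y (φ n)) b) atTop (nhds 0) := by
        have := tendsto_iff_dist_tendsto_zero.1 hzconv
        rw [hzb] at this
        exact this
      have hcomp : Tendsto ((fun n => dist (y n) b) ∘ φ) atTop (nhds Lu) :=
        hLuyb.comp hφ.tendsto_atTop
      have : Lu = 0 := tendsto_nhds_unique hcomp hsub
      rw [← this]
      exact hLuyb
    apply hxdist0
    have hx1 : Tendsto (fun n => dist (x (n+1)) u) atTop (nhds 0) :=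
      squeeze_zero (fun n => dist_nonneg) hchain2 hfy0
    exact (tendsto_add_atTop_iff_nat 1).1 hx1
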